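/- Let r, γ, T* > 0, let ρ₀ ∈ L^∞(ℝ^d) with ρ₀ ≥ 0 and ‖ρ₀‖_{L^∞} ≤ r, and let ρ, ψ ∈ B_{T*,γ}(r) with ρ_0 = ψ_0 = ρ₀. Then for all t ∈ [0, T*] and x ∈ ℝ^d, | (F(ρ) − F(ψ))_t(x) | ≤ e^{γ⟨c₂⟩t} g(t) ‖ρ − ψ‖_{T*,γ}, where g(t) = t [ (3/2) r² ⟨c₁⟩ e^{2γ⟨c₂⟩t} ( ⟨c₁⟩ t + ⟨φ₁⟩ ) + r e^{γ⟨c₂⟩t} ( 2 ⟨c₁⟩ ⟨c₂⟩ t + 3 ⟨c₁⟩ + 2 ⟨c₂⟩ ⟨φ₂⟩ ) + 2 ⟨c₂⟩ ]. -/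

import Mathlib

open MeasureTheory Set

noncomputable section

/-- Euclidean space `ℝ^d`, modeled as functions `Fin d → ℝ`. -/
abbrev Rd (d : ℕ) := Fin d → ℝ

/-- The (sup) `L^∞` norm of a function on `ℝ^d`. -/
def linf {d : ℕ} (f : Rd d → ℝ) : ℝ := ⨆ x, |f x|

/-- Membership in `L^∞(ℝ^d)`: measurable and (everywhere) bounded. -/
def MemLinf {d : ℕ} (f : Rd d → ℝ) : Prop := Measurable f ∧ ∃ M : ℝ, ∀ x, |f x| ≤ M

/-- `h(ρ,x) = (1/2) ∬ (c₁(x,y;z)+c₁(y,x;z)) ρ(y) dy dz + ⟨c₂⟩`. -/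
def hker {d : ℕ} (c₁ : Rd d → Rd d → Rd d → ℝ) (C2 : ℝ) (ρ : Rd d → ℝ) (x : Rd d) : ℝ :=
  1/2 * (∫ y, ∫ z, (c₁ x y z + c₁ y x z) * ρ y) + C2

/-- `R₂(ρ,x)`, the positive part of the right-hand side of the kinetic equation. -/
def R2 {d : ℕ} (c₁ : Rd d → Rd d → Rd d → ℝ) (c₂ : Rd d → Rd d → ℝ)
    (φ₁ φ₂ : Rd d → ℝ) (ρ : Rd d → ℝ) (x : Rd d) : ℝ :=
  1/2 * (∫ y, ∫ z, c₁ y z x * Real.exp (-∫ u, φ₁ (x - u) * ρ u) * ρ y * ρ z)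
    + 1/2 * (∫ y, ∫ z, (c₁ x y z + c₁ y x z) *
        (1 - Real.exp (-∫ u, φ₁ (z - u) * ρ u)) * ρ x * ρ y)
    + (∫ y, c₂ y x * Real.exp (-∫ u, φ₂ (x - u) * ρ u) * ρ y)
    + (∫ y, c₂ x y * (1 - Real.exp (-∫ u, φ₂ (y - u) * ρ u)) * ρ x)

/-- The fixed point map `F` given by the right-hand side of the integral equation. -/
def Fmap {d : ℕ} (c₁ : Rd d → Rd d → Rd d → ℝ) (c₂ : Rd d → Rd d → ℝ)
    (φ₁ φ₂ : Rd d → ℝ) (C2 : ℝ) (ρ₀ : Rd d → ℝ) (ρ : ℝ → Rd d → ℝ) (t : ℝ) (x : Rd d) : ℝ :=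
  ρ₀ x * Real.exp (-∫ s in (0:ℝ)..t, hker c₁ C2 (ρ s) x)
    + ∫ s in (0:ℝ)..t, R2 c₁ c₂ φ₁ φ₂ (ρ s) x * Real.exp (-∫ σ in s..t, hker c₁ C2 (ρ σ) x)

/-- The weighted norm `‖ρ‖_{T,γ} = sup_{t∈[0,T]} e^{-γ⟨c₂⟩t} ‖ρ_t‖_{L^∞}`. -/
def normTg {d : ℕ} (T γ C2 : ℝ) (ρ : ℝ → Rd d → ℝ) : ℝ :=
  ⨆ t : Icc (0:ℝ) T, Real.exp (-(γ * C2 * t.1)) * linf (ρ t.1)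

/-- Continuity on `S ⊆ ℝ` of a curve of functions, in the `L^∞` norm. -/
def LinfContOn {d : ℕ} (S : Set ℝ) (ρ : ℝ → Rd d → ℝ) : Prop :=
  ∀ t ∈ S, ∀ ε > 0, ∃ δ > 0, ∀ s ∈ S, |s - t| < δ → linf (fun x => ρ s x - ρ t x) < ε

/-- Membership in the ball `B_{T,γ}(r) ⊆ C([0,T] → L^∞)`. -/
def memB {d : ℕ} (T γ C2 r : ℝ) (ρ : ℝ → Rd d → ℝ) : Prop :=
  LinfContOn (Icc 0 T) ρ ∧ (∀ t ∈ Icc (0:ℝ) T, MemLinf (ρ t)) ∧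
    (∀ t ∈ Icc (0:ℝ) T, ∀ x, 0 ≤ ρ t x) ∧ normTg T γ C2 ρ ≤ r

/-- Differentiability at `t` (within `S ⊆ ℝ`) of a curve, in the `L^∞` norm,
with derivative `g`. -/
def HasLinfDerivWithinAt {d : ℕ} (ρ : ℝ → Rd d → ℝ) (g : Rd d → ℝ) (S : Set ℝ) (t : ℝ) : Prop :=
  ∀ ε > 0, ∃ δ > 0, ∀ s ∈ S, |s - t| < δ →
    linf (fun x => ρ s x - ρ t x - (s - t) * g x) ≤ ε * |s - t|

/-- The right-hand side of the kinetic equation: `−ρ(x) h(ρ,x) + R₂(ρ,x)`. -/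
def kderiv {d : ℕ} (c₁ : Rd d → Rd d → Rd d → ℝ) (c₂ : Rd d → Rd d → ℝ)
    (φ₁ φ₂ : Rd d → ℝ) (C2 : ℝ) (ρ : Rd d → ℝ) : Rd d → ℝ :=
  fun x => -(ρ x) * hker c₁ C2 ρ x + R2 c₁ c₂ φ₁ φ₂ ρ x

/-- `ρ` is a (local) classical solution of the kinetic equation on `[0,T]` with initial
value `ρ₀`: nonnegative and `L^∞`-valued, continuously differentiable in the `L^∞` norm,
and satisfying `d/dt ρ_t = −ρ_t·h(ρ_t,·) + R₂(ρ_t,·)`, `ρ_0 = ρ₀`. -/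
def IsSol {d : ℕ} (c₁ : Rd d → Rd d → Rd d → ℝ) (c₂ : Rd d → Rd d → ℝ)
    (φ₁ φ₂ : Rd d → ℝ) (C2 : ℝ) (ρ₀ : Rd d → ℝ) (T : ℝ) (ρ : ℝ → Rd d → ℝ) : Prop :=
  (∀ t ∈ Icc (0:ℝ) T, MemLinf (ρ t)) ∧ (∀ t ∈ Icc (0:ℝ) T, ∀ x, 0 ≤ ρ t x) ∧
    ρ 0 = ρ₀ ∧
    (∀ t ∈ Icc (0:ℝ) T, HasLinfDerivWithinAt ρ (kderiv c₁ c₂ φ₁ φ₂ C2 (ρ t)) (Icc 0 T) t) ∧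
    LinfContOn (Icc 0 T) (fun t => kderiv c₁ c₂ φ₁ φ₂ C2 (ρ t))


lemma exp_neg_sub_le {a b : ℝ} (ha : 0 ≤ a) (hab : a ≤ b) :
    Real.exp (-a) - Real.exp (-b) ≤ b - a := by
  have h1 : Real.exp (-b) = Real.exp (-a) * Real.exp (a - b) := by
    rw [← Real.exp_add]; ring_nf
  have h2 := Real.add_one_le_exp (a - b)
  have h3 : Real.exp (-a) ≤ 1 := Real.exp_le_one_iff.2 (by linarith)
  have h4 : Real.exp (a - b) ≤ 1 := Real.exp_le_one_iff.2 (by linarith)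
  nlinarith [Real.exp_pos (-a), mul_nonneg (sub_nonneg.2 h4) (sub_nonneg.2 h3)]

lemma abs_exp_sub_exp {a b : ℝ} (ha : 0 ≤ a) (hb : 0 ≤ b) :
    |Real.exp (-a) - Real.exp (-b)| ≤ |a - b| := by
  rcases le_total a b with h | h
  · rw [abs_of_nonneg (by simpa using Real.exp_le_exp.2 (by linarith : -b ≤ -a)),
      abs_of_nonpos (by linarith)]
    have := exp_neg_sub_le ha h; linarith
  · rw [abs_of_nonpos (by simpa using Real.exp_le_exp.2 (by linarith : -a ≤ -b)),
      abs_of_nonneg (by linarith)]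
    have := exp_neg_sub_le hb h; linarith

lemma convex_exp_bound {q b : ℝ} (hq : 0 ≤ q) (hbl : Real.exp (-q) ≤ b) (hbu : b ≤ 1) :
    2 * (1 - b) + b * q ≤ 1 + q := by
  rcases le_total q 2 with h | h
  · have h1 : 1 - q ≤ Real.exp (-q) := by nlinarith [Real.add_one_le_exp (-q)]
    nlinarith [mul_nonneg (sub_nonneg.2 (h1.trans hbl)) (sub_nonneg.2 h), sq_nonneg (q - 1)]
  · nlinarith [mul_le_mul_of_nonneg_right hbu (by linarith : (0:ℝ) ≤ q - 2)]

lemma abs_mul_sub_mul {p1 p2 q1 q2 R D : ℝ}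
    (hp1 : |p1| ≤ R) (hq2 : |q2| ≤ R) (h1 : |p1 - q1| ≤ D) (h2 : |p2 - q2| ≤ D) :
    |p1 * p2 - q1 * q2| ≤ 2 * (R * D) := by
  have key : p1 * p2 - q1 * q2 = p1 * (p2 - q2) + (p1 - q1) * q2 := by ring
  calc |p1 * p2 - q1 * q2| ≤ |p1 * (p2 - q2)| + |(p1 - q1) * q2| := key ▸ abs_add_le _ _
    _ ≤ R * D + D * R := by
        rw [abs_mul, abs_mul]
        gcongr <;> first | exact (abs_nonneg _).trans hp1 | exact (abs_nonneg _).trans h1 | assumption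
    _ = 2 * (R * D) := by ring

lemma term1_scalar {R D W a b p1 p2 q1 q2 : ℝ} (hR : 0 ≤ R) (hW : 0 ≤ W)
    (ha : 0 ≤ a) (hb : 0 ≤ b) (hab : |a - b| ≤ W)
    (hp1 : |p1| ≤ R) (hq1 : |q1| ≤ R) (hq2 : |q2| ≤ R)
    (h1 : |p1 - q1| ≤ D) (h2 : |p2 - q2| ≤ D) :
    |Real.exp (-a) * p1 * p2 - Real.exp (-b) * q1 * q2| ≤ 2 * (R * D) + W * R ^ 2 := by
  have key : Real.exp (-a) * p1 * p2 - Real.exp (-b) * q1 * q2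
      = Real.exp (-a) * (p1 * p2 - q1 * q2) + (Real.exp (-a) - Real.exp (-b)) * (q1 * q2) := by
    ring
  have hQ : |q1 * q2| ≤ R ^ 2 := by
    rw [abs_mul, sq]; exact mul_le_mul hq1 hq2 (abs_nonneg _) hR
  have hE : |Real.exp (-a)| ≤ 1 := by
    rw [abs_of_nonneg (Real.exp_pos _).le]; exact Real.exp_le_one_iff.2 (by linarith)
  have hed : |Real.exp (-a) - Real.exp (-b)| ≤ W := (abs_exp_sub_exp ha hb).trans hab
  have hpq : |p1 * p2 - q1 * q2| ≤ 2 * (R * D) := abs_mul_sub_mul hp1 hq2 h1 h2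
  calc |Real.exp (-a) * p1 * p2 - Real.exp (-b) * q1 * q2|
      ≤ |Real.exp (-a) * (p1 * p2 - q1 * q2)| + |(Real.exp (-a) - Real.exp (-b)) * (q1 * q2)| :=
        key ▸ abs_add_le _ _
    _ ≤ 1 * (2 * (R * D)) + W * R ^ 2 := by
        rw [abs_mul, abs_mul]
        gcongr <;> first | exact abs_nonneg _ | positivity | assumption
    _ = 2 * (R * D) + W * R ^ 2 := by ring

lemma term3_scalar {R D W a b p q : ℝ} (hR : 0 ≤ R) (hW : 0 ≤ W)
    (ha : 0 ≤ a) (hb : 0 ≤ b) (hab : |a - b| ≤ W)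
    (hq : |q| ≤ R) (h1 : |p - q| ≤ D) :
    |Real.exp (-a) * p - Real.exp (-b) * q| ≤ D + W * R := by
  have key : Real.exp (-a) * p - Real.exp (-b) * q
      = Real.exp (-a) * (p - q) + (Real.exp (-a) - Real.exp (-b)) * q := by ring
  have hE : |Real.exp (-a)| ≤ 1 := by
    rw [abs_of_nonneg (Real.exp_pos _).le]; exact Real.exp_le_one_iff.2 (by linarith)
  have hed : |Real.exp (-a) - Real.exp (-b)| ≤ W := (abs_exp_sub_exp ha hb).trans hab
  calc |Real.exp (-a) * p - Real.exp (-b) * q|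
      ≤ |Real.exp (-a) * (p - q)| + |(Real.exp (-a) - Real.exp (-b)) * q| := key ▸ abs_add_le _ _
    _ ≤ 1 * D + W * R := by
        rw [abs_mul, abs_mul]
        gcongr <;> first | exact abs_nonneg _ | assumption
    _ = D + W * R := by ring

lemma term4_scalar {R D W a b p q : ℝ} (hR : 0 ≤ R) (hW : 0 ≤ W)
    (ha : 0 ≤ a) (hb : 0 ≤ b) (hab : |a - b| ≤ W)
    (hq : |q| ≤ R) (h1 : |p - q| ≤ D) :
    |(1 - Real.exp (-a)) * p - (1 - Real.exp (-b)) * q| ≤ D + W * R := by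
  have key : (1 - Real.exp (-a)) * p - (1 - Real.exp (-b)) * q
      = (1 - Real.exp (-a)) * (p - q) + (Real.exp (-b) - Real.exp (-a)) * q := by ring
  have hE : |1 - Real.exp (-a)| ≤ 1 := by
    rw [abs_of_nonneg (by nlinarith [Real.exp_le_one_iff.2 (by linarith : -a ≤ 0)])]
    nlinarith [Real.exp_pos (-a)]
  have hed : |Real.exp (-b) - Real.exp (-a)| ≤ W := by
    rw [abs_sub_comm]; exact (abs_exp_sub_exp ha hb).trans hab
  calc |(1 - Real.exp (-a)) * p - (1 - Real.exp (-b)) * q|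
      ≤ |(1 - Real.exp (-a)) * (p - q)| + |(Real.exp (-b) - Real.exp (-a)) * q| :=
        key ▸ abs_add_le _ _
    _ ≤ 1 * D + W * R := by
        rw [abs_mul, abs_mul]
        gcongr <;> first | exact abs_nonneg _ | assumption
    _ = D + W * R := by ring

lemma term2_aux {R D Φ a b p1 p2 q1 q2 : ℝ} (hR : 0 ≤ R) (hD : 0 ≤ D) (hΦ : 0 ≤ Φ)
    (ha0 : 0 ≤ a) (haq : a ≤ Φ * R) (hb0 : 0 ≤ b) (hab : |a - b| ≤ Φ * D)
    (hp1 : |p1| ≤ R) (hq1 : |q1| ≤ R) (hq2 : |q2| ≤ R)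
    (h1 : |p1 - q1| ≤ D) (h2 : |p2 - q2| ≤ D) (hle : a ≤ b) :
    |(1 - Real.exp (-a)) * p1 * p2 - (1 - Real.exp (-b)) * q1 * q2| ≤ D * R * (1 + Φ * R) := by
  set A := Real.exp (-a) with hA
  set B := Real.exp (-b) with hB
  have hA1 : A ≤ 1 := Real.exp_le_one_iff.2 (by linarith)
  have hA0 : 0 < A := Real.exp_pos _
  have hBA : B ≤ A := Real.exp_le_exp.2 (by linarith)
  have hB0 : 0 < B := Real.exp_pos _
  have hABle : A - B ≤ A * (Φ * D) := by
    have h1' : A - B ≤ b - a := exp_neg_sub_le ha0 hle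
    have h2' : b - a ≤ Φ * D := by rw [abs_of_nonpos (by linarith)] at hab; linarith
    have h3' : A - B ≤ A * (b - a) := by
      have hBe : B = A * Real.exp (a - b) := by rw [hA, hB, ← Real.exp_add]; ring_nf
      nlinarith [Real.add_one_le_exp (a - b)]
    exact h3'.trans (mul_le_mul_of_nonneg_left h2' hA0.le)
  have hpq : |p1 * p2 - q1 * q2| ≤ 2 * (R * D) := abs_mul_sub_mul hp1 hq2 h1 h2
  have hQ : |q1 * q2| ≤ R ^ 2 := by
    rw [abs_mul, sq]; exact mul_le_mul hq1 hq2 (abs_nonneg _) hR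
  have key : (1 - A) * p1 * p2 - (1 - B) * q1 * q2
      = (1 - A) * (p1 * p2 - q1 * q2) + (B - A) * (q1 * q2) := by ring
  have t1 : |(1 - A) * (p1 * p2 - q1 * q2)| ≤ (1 - A) * (2 * (R * D)) := by
    rw [abs_mul, abs_of_nonneg (by linarith : (0:ℝ) ≤ 1 - A)]
    exact mul_le_mul_of_nonneg_left hpq (by linarith)
  have t2 : |(B - A) * (q1 * q2)| ≤ (A * (Φ * D)) * R ^ 2 := by
    rw [abs_mul, abs_of_nonpos (by linarith : B - A ≤ 0)]
    exact mul_le_mul (by linarith) hQ (abs_nonneg _) (by positivity)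
  have step : |(1 - A) * p1 * p2 - (1 - B) * q1 * q2|
      ≤ (1 - A) * (2 * (R * D)) + (A * (Φ * D)) * R ^ 2 :=
    (key ▸ abs_add_le _ _).trans (add_le_add t1 t2)
  refine step.trans ?_
  -- convexity step
  have hconv : 2 * (1 - A) + A * (Φ * R) ≤ 1 + Φ * R :=
    convex_exp_bound (by positivity) (by rw [hA]; exact Real.exp_le_exp.2 (by linarith)) hA1
  nlinarith [mul_le_mul_of_nonneg_left hconv (mul_nonneg hD hR)]

lemma term2_scalar {R D Φ a b p1 p2 q1 q2 : ℝ} (hR : 0 ≤ R) (hD : 0 ≤ D) (hΦ : 0 ≤ Φ)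
    (ha0 : 0 ≤ a) (haq : a ≤ Φ * R) (hb0 : 0 ≤ b) (hbq : b ≤ Φ * R) (hab : |a - b| ≤ Φ * D)
    (hp1 : |p1| ≤ R) (hp2 : |p2| ≤ R) (hq1 : |q1| ≤ R) (hq2 : |q2| ≤ R)
    (h1 : |p1 - q1| ≤ D) (h2 : |p2 - q2| ≤ D) :
    |(1 - Real.exp (-a)) * p1 * p2 - (1 - Real.exp (-b)) * q1 * q2| ≤ D * R * (1 + Φ * R) := by
  rcases le_total a b with h | h
  · exact term2_aux hR hD hΦ ha0 haq hb0 hab hp1 hq1 hq2 h1 h2 h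
  · rw [abs_sub_comm]
    exact term2_aux hR hD hΦ hb0 hbq ha0 (by rwa [abs_sub_comm]) hq1 hp1 hp2
      (by rwa [abs_sub_comm]) (by rwa [abs_sub_comm]) h

-- ===================== auxiliary lemmas =====================

section Aux
variable {d : ℕ}

lemma linf_nonneg (f : Rd d → ℝ) : 0 ≤ linf f :=
  Real.iSup_nonneg fun _ => abs_nonneg _

lemma le_linf {f : Rd d → ℝ} {M : ℝ} (hM : ∀ x, |f x| ≤ M) (x : Rd d) : |f x| ≤ linf f :=
  le_ciSup ⟨M, by rintro _ ⟨y, rfl⟩; exact hM y⟩ x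

lemma linf_le {f : Rd d → ℝ} {M : ℝ} (hM : ∀ x, |f x| ≤ M) : linf f ≤ M :=
  ciSup_le hM

lemma int_mul_le {α : Type*} [MeasureSpace α] {c f : α → ℝ} {C M : ℝ}
    (hc : Integrable c) (hcnn : ∀ a, 0 ≤ c a) (hC : (∫ a, c a) = C) (hM : 0 ≤ M)
    (hf : ∀ a, |f a| ≤ M) : |∫ a, c a * f a| ≤ C * M := by
  have h1 : |∫ a, c a * f a| ≤ ∫ a, |c a| * |f a| := by
    simpa [Real.norm_eq_abs, abs_mul] using
      norm_integral_le_integral_norm (μ := volume) (fun a => c a * f a)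
  have h2 : (∫ a, |c a| * |f a|) ≤ ∫ a, c a * M := by
    refine integral_mono_of_nonneg
      (Filter.Eventually.of_forall fun a => mul_nonneg (abs_nonneg _) (abs_nonneg _))
      (hc.mul_const M) (Filter.Eventually.of_forall fun a => ?_)
    show |c a| * |f a| ≤ c a * M
    rw [abs_of_nonneg (hcnn a)]
    exact mul_le_mul_of_nonneg_left (hf a) (hcnn a)
  have h3 : (∫ a, c a * M) = C * M := by rw [integral_mul_const, hC]
  linarith

lemma int_diff_le {α : Type*} [MeasureSpace α] {c f g : α → ℝ} {C M : ℝ}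
    (hc : Integrable c) (hcnn : ∀ a, 0 ≤ c a) (hC : (∫ a, c a) = C) (hM : 0 ≤ M)
    (hf : Integrable (fun a => c a * f a)) (hg : Integrable (fun a => c a * g a))
    (hfg : ∀ a, |f a - g a| ≤ M) :
    |(∫ a, c a * f a) - ∫ a, c a * g a| ≤ C * M := by
  rw [← integral_sub hf hg]
  have he : (fun a => c a * f a - c a * g a) = fun a => c a * (f a - g a) := by
    funext a; ring
  rw [he]
  exact int_mul_le hc hcnn hC hM hfg

lemma prod_int_bdd_mul {α : Type*} [MeasureSpace α] {c : α → ℝ} (hc : Integrable c)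
    {w : α → ℝ} (hw : AEStronglyMeasurable w (volume : Measure α)) {K : ℝ}
    (hK : ∀ p, |w p| ≤ K) : Integrable (fun p => c p * w p) := by
  have := hc.bdd_mul hw (Filter.Eventually.of_forall fun p => by simpa [Real.norm_eq_abs] using hK p)
  simpa [mul_comm] using this

lemma iter_to_prod {F : Rd d → Rd d → ℝ}
    (hF : Integrable (fun p : Rd d × Rd d => F p.1 p.2)) :
    (∫ y, ∫ z, F y z) = ∫ p : Rd d × Rd d, F p.1 p.2 := by
  rw [Measure.volume_eq_prod] at hF
  exact integral_integral hF

lemma measurable_conv {φ ρ : Rd d → ℝ} (hφ : Measurable φ) (hρ : Measurable ρ) :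
    Measurable fun z : Rd d => ∫ u, φ (z - u) * ρ u := by
  have h : Measurable (fun p : Rd d × Rd d => φ (p.1 - p.2) * ρ p.2) :=
    (hφ.comp (measurable_fst.sub measurable_snd)).mul (hρ.comp measurable_snd)
  exact h.stronglyMeasurable.integral_prod_right'.measurable

lemma conv_nonneg {φ ρ : Rd d → ℝ} (hφ : ∀ u, 0 ≤ φ u) (hρ : ∀ u, 0 ≤ ρ u) (z : Rd d) :
    0 ≤ ∫ u, φ (z - u) * ρ u :=
  integral_nonneg fun u => mul_nonneg (hφ _) (hρ u)

lemma conv_le {φ ρ : Rd d → ℝ} {Φ B : ℝ} (hφint : Integrable φ) (hφ : ∀ u, 0 ≤ φ u)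
    (hφval : (∫ u, φ u) = Φ) (hρ : ∀ u, 0 ≤ ρ u) (hρB : ∀ u, ρ u ≤ B) (z : Rd d) :
    (∫ u, φ (z - u) * ρ u) ≤ Φ * B := by
  have hint : Integrable fun u => φ (z - u) := hφint.comp_sub_left z
  have h1 : (∫ u, φ (z - u) * ρ u) ≤ ∫ u, φ (z - u) * B := by
    refine integral_mono_of_nonneg
      (Filter.Eventually.of_forall fun u => mul_nonneg (hφ _) (hρ u))
      (hint.mul_const B) (Filter.Eventually.of_forall fun u => ?_)
    exact mul_le_mul_of_nonneg_left (hρB u) (hφ _)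
  have h2 : (∫ u, φ (z - u) * B) = Φ * B := by
    rw [integral_mul_const, integral_sub_left_eq_self φ volume z, hφval]
  linarith

lemma conv_diff {φ ρ ψ : Rd d → ℝ} {Φ B D : ℝ} (hφint : Integrable φ) (hφ : ∀ u, 0 ≤ φ u)
    (hφval : (∫ u, φ u) = Φ) (hρm : Measurable ρ) (hψm : Measurable ψ)
    (hρB : ∀ u, |ρ u| ≤ B) (hψB : ∀ u, |ψ u| ≤ B) (hD : 0 ≤ D)
    (hd : ∀ u, |ρ u - ψ u| ≤ D) (z : Rd d) :
    |(∫ u, φ (z - u) * ρ u) - ∫ u, φ (z - u) * ψ u| ≤ Φ * D := by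
  have hint : Integrable fun u => φ (z - u) := hφint.comp_sub_left z
  have hval : (∫ u, φ (z - u)) = Φ := by
    rw [integral_sub_left_eq_self φ volume z, hφval]
  exact int_diff_le hint (fun u => hφ _) hval hD
    (prod_int_bdd_mul hint hρm.aestronglyMeasurable hρB)
    (prod_int_bdd_mul hint hψm.aestronglyMeasurable hψB) hd

end Aux

section Kernels
variable {d : ℕ} {c₁ : Rd d → Rd d → Rd d → ℝ} {c₂ : Rd d → Rd d → ℝ}
  {φ₁ φ₂ : Rd d → ℝ} {C1 C2 Φ₁ Φ₂ : ℝ}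

lemma abs_exp_mul_le {e p1 p2 B : ℝ} (he : 0 ≤ e) (he1 : e ≤ 1) (h1 : |p1| ≤ B)
    (h2 : |p2| ≤ B) (hB : 0 ≤ B) : |e * p1 * p2| ≤ B ^ 2 := by
  rw [abs_mul, abs_mul, abs_of_nonneg he, sq]
  calc e * |p1| * |p2| ≤ 1 * B * B := by
        apply mul_le_mul (mul_le_mul he1 h1 (abs_nonneg _) (by norm_num)) h2 (abs_nonneg _)
        positivity
    _ = B * B := by ring

-- value of the doubled kernel
lemma val2 {x : Rd d} (hc₁int₂₃ : Integrable fun p : Rd d × Rd d => c₁ x p.1 p.2)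
    (hc₁val₂₃ : (∫ y, ∫ z, c₁ x y z) = C1) :
    (∫ y, ∫ z, 2 * c₁ x y z) = 2 * C1 := by
  have h : (fun y => ∫ z, 2 * c₁ x y z) = fun y => 2 * ∫ z, c₁ x y z := by
    funext y; exact integral_const_mul 2 _
  calc (∫ y, ∫ z, 2 * c₁ x y z) = ∫ y, 2 * ∫ z, c₁ x y z := by rw [h]
    _ = 2 * ∫ y, ∫ z, c₁ x y z := integral_const_mul 2 _
    _ = 2 * C1 := by rw [hc₁val₂₃]

lemma hker_rw (hc₁sym : ∀ x y z, c₁ x y z = c₁ y x z) (ρ : Rd d → ℝ) (x : Rd d) :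
    hker c₁ C2 ρ x = 1/2 * (∫ y, ∫ z, 2 * c₁ x y z * ρ y) + C2 := by
  unfold hker
  have h : ∀ y, (∫ z, (c₁ x y z + c₁ y x z) * ρ y) = ∫ z, 2 * c₁ x y z * ρ y := fun y =>
    integral_congr_ae (Filter.Eventually.of_forall fun z => by
      show (c₁ x y z + c₁ y x z) * ρ y = 2 * c₁ x y z * ρ y
      rw [← hc₁sym x y z]; ring)
  rw [show (∫ y, ∫ z, (c₁ x y z + c₁ y x z) * ρ y) = ∫ y, ∫ z, 2 * c₁ x y z * ρ y from
    integral_congr_ae (Filter.Eventually.of_forall h)]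

lemma hker_lower (hc₁nn : ∀ x y z, 0 ≤ c₁ x y z) (ρ : Rd d → ℝ)
    (hρ0 : ∀ y, 0 ≤ ρ y) (x : Rd d) : C2 ≤ hker c₁ C2 ρ x := by
  unfold hker
  have : 0 ≤ ∫ y, ∫ z, (c₁ x y z + c₁ y x z) * ρ y :=
    integral_nonneg fun y => integral_nonneg fun z =>
      mul_nonneg (add_nonneg (hc₁nn _ _ _) (hc₁nn _ _ _)) (hρ0 y)
  linarith

lemma hker_upper {x : Rd d} {B : ℝ} (hc₁nn : ∀ x y z, 0 ≤ c₁ x y z)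
    (hc₁sym : ∀ x y z, c₁ x y z = c₁ y x z)
    (hc₁int₂₃ : Integrable fun p : Rd d × Rd d => c₁ x p.1 p.2)
    (hc₁val₂₃ : (∫ y, ∫ z, c₁ x y z) = C1)
    {ρ : Rd d → ℝ} (hρm : Measurable ρ) (hρB : ∀ y, |ρ y| ≤ B) (hB : 0 ≤ B) :
    hker c₁ C2 ρ x ≤ C2 + C1 * B := by
  rw [hker_rw hc₁sym]
  have cInt : Integrable (fun p : Rd d × Rd d => 2 * c₁ x p.1 p.2) := hc₁int₂₃.const_mul 2
  have wInt : Integrable (fun p : Rd d × Rd d => 2 * c₁ x p.1 p.2 * ρ p.1) :=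
    prod_int_bdd_mul cInt (hρm.comp measurable_fst).aestronglyMeasurable fun p => hρB p.1
  have h1 : (∫ y, ∫ z, 2 * c₁ x y z * ρ y)
      = ∫ p : Rd d × Rd d, 2 * c₁ x p.1 p.2 * ρ p.1 := iter_to_prod wInt
  have h2 : (∫ y, ∫ z, 2 * c₁ x y z) = ∫ p : Rd d × Rd d, 2 * c₁ x p.1 p.2 :=
    iter_to_prod cInt
  have h3 : |∫ p : Rd d × Rd d, 2 * c₁ x p.1 p.2 * ρ p.1| ≤ 2 * C1 * B := by
    refine int_mul_le cInt (fun p => by have := hc₁nn x p.1 p.2; linarith) ?_ hB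
      fun p => hρB p.1
    rw [← h2, val2 hc₁int₂₃ hc₁val₂₃]
  rw [h1]
  have := abs_le.1 h3
  linarith

lemma hker_diff {x : Rd d} {B D : ℝ} (hc₁nn : ∀ x y z, 0 ≤ c₁ x y z)
    (hc₁sym : ∀ x y z, c₁ x y z = c₁ y x z)
    (hc₁int₂₃ : Integrable fun p : Rd d × Rd d => c₁ x p.1 p.2)
    (hc₁val₂₃ : (∫ y, ∫ z, c₁ x y z) = C1)
    {ρ ψ : Rd d → ℝ} (hρm : Measurable ρ) (hψm : Measurable ψ)
    (hρB : ∀ y, |ρ y| ≤ B) (hψB : ∀ y, |ψ y| ≤ B) (hD : 0 ≤ D)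
    (hd : ∀ y, |ρ y - ψ y| ≤ D) :
    |hker c₁ C2 ρ x - hker c₁ C2 ψ x| ≤ C1 * D := by
  rw [hker_rw hc₁sym, hker_rw hc₁sym]
  have cInt : Integrable (fun p : Rd d × Rd d => 2 * c₁ x p.1 p.2) := hc₁int₂₃.const_mul 2
  have wIntρ : Integrable (fun p : Rd d × Rd d => 2 * c₁ x p.1 p.2 * ρ p.1) :=
    prod_int_bdd_mul cInt (hρm.comp measurable_fst).aestronglyMeasurable fun p => hρB p.1
  have wIntψ : Integrable (fun p : Rd d × Rd d => 2 * c₁ x p.1 p.2 * ψ p.1) :=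
    prod_int_bdd_mul cInt (hψm.comp measurable_fst).aestronglyMeasurable fun p => hψB p.1
  have h2' : (∫ y, ∫ z, 2 * c₁ x y z) = ∫ p : Rd d × Rd d, 2 * c₁ x p.1 p.2 :=
    iter_to_prod cInt
  have h2 : (∫ p : Rd d × Rd d, 2 * c₁ x p.1 p.2) = 2 * C1 := by
    rw [← h2', val2 hc₁int₂₃ hc₁val₂₃]
  have key : |(∫ p : Rd d × Rd d, 2 * c₁ x p.1 p.2 * ρ p.1)
      - ∫ p : Rd d × Rd d, 2 * c₁ x p.1 p.2 * ψ p.1| ≤ 2 * C1 * D :=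
    int_diff_le cInt (fun p => by have := hc₁nn x p.1 p.2; linarith) h2 hD wIntρ wIntψ
      fun p => hd p.1
  rw [iter_to_prod wIntρ, iter_to_prod wIntψ]
  have := abs_le.1 key
  rw [abs_le]
  constructor <;> nlinarith [this.1, this.2]

end Kernels

section R2sec
variable {d : ℕ} {c₁ : Rd d → Rd d → Rd d → ℝ} {c₂ : Rd d → Rd d → ℝ}
  {φ₁ φ₂ : Rd d → ℝ} {C1 C2 Φ₁ Φ₂ : ℝ}

lemma iint_congr {F G : Rd d → Rd d → ℝ} (h : ∀ y z, F y z = G y z) :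
    (∫ y, ∫ z, F y z) = ∫ y, ∫ z, G y z :=
  integral_congr_ae (Filter.Eventually.of_forall fun y =>
    integral_congr_ae (Filter.Eventually.of_forall fun z => h y z))

lemma int_congr {F G : Rd d → ℝ} (h : ∀ y, F y = G y) : (∫ y, F y) = ∫ y, G y :=
  integral_congr_ae (Filter.Eventually.of_forall h)

lemma abs_exp_mul_le1 {e p B : ℝ} (he : 0 ≤ e) (he1 : e ≤ 1) (hp : |p| ≤ B) :
    |e * p| ≤ B := by
  rw [abs_mul, abs_of_nonneg he]
  nlinarith [abs_nonneg p]

lemma R2_nonneg (hc₁nn : ∀ x y z, 0 ≤ c₁ x y z) (hc₂nn : ∀ x y, 0 ≤ c₂ x y)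
    (hφ₁nn : ∀ u, 0 ≤ φ₁ u) (hφ₂nn : ∀ u, 0 ≤ φ₂ u)
    {ρ : Rd d → ℝ} (hρ0 : ∀ y, 0 ≤ ρ y) (x : Rd d) :
    0 ≤ R2 c₁ c₂ φ₁ φ₂ ρ x := by
  unfold R2
  have e1 : ∀ z : Rd d, 0 ≤ 1 - Real.exp (-∫ u, φ₁ (z - u) * ρ u) := by
    intro z
    have := conv_nonneg hφ₁nn hρ0 z
    have := Real.exp_le_one_iff.2 (neg_nonpos.2 this)
    linarith
  have e2 : ∀ z : Rd d, 0 ≤ 1 - Real.exp (-∫ u, φ₂ (z - u) * ρ u) := by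
    intro z
    have := conv_nonneg hφ₂nn hρ0 z
    have := Real.exp_le_one_iff.2 (neg_nonpos.2 this)
    linarith
  have h1 : 0 ≤ ∫ y, ∫ z, c₁ y z x * Real.exp (-∫ u, φ₁ (x - u) * ρ u) * ρ y * ρ z :=
    integral_nonneg fun y => integral_nonneg fun z =>
      mul_nonneg (mul_nonneg (mul_nonneg (hc₁nn _ _ _) (Real.exp_pos _).le) (hρ0 y)) (hρ0 z)
  have h2 : 0 ≤ ∫ y, ∫ z, (c₁ x y z + c₁ y x z) *
      (1 - Real.exp (-∫ u, φ₁ (z - u) * ρ u)) * ρ x * ρ y :=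
    integral_nonneg fun y => integral_nonneg fun z =>
      mul_nonneg (mul_nonneg (mul_nonneg (add_nonneg (hc₁nn _ _ _) (hc₁nn _ _ _)) (e1 z))
        (hρ0 x)) (hρ0 y)
  have h3 : 0 ≤ ∫ y, c₂ y x * Real.exp (-∫ u, φ₂ (x - u) * ρ u) * ρ y :=
    integral_nonneg fun y =>
      mul_nonneg (mul_nonneg (hc₂nn _ _) (Real.exp_pos _).le) (hρ0 y)
  have h4 : 0 ≤ ∫ y, c₂ x y * (1 - Real.exp (-∫ u, φ₂ (y - u) * ρ u)) * ρ x :=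
    integral_nonneg fun y => mul_nonneg (mul_nonneg (hc₂nn _ _) (e2 y)) (hρ0 x)
  linarith

lemma R2_upper {x : Rd d} {B : ℝ}
    (hc₁nn : ∀ x y z, 0 ≤ c₁ x y z) (hc₁sym : ∀ x y z, c₁ x y z = c₁ y x z)
    (hc₁int₁₂ : Integrable fun p : Rd d × Rd d => c₁ p.1 p.2 x)
    (hc₁int₂₃ : Integrable fun p : Rd d × Rd d => c₁ x p.1 p.2)
    (hc₁val₁₂ : (∫ y, ∫ z, c₁ y z x) = C1)
    (hc₁val₂₃ : (∫ y, ∫ z, c₁ x y z) = C1)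
    (hc₂nn : ∀ x y, 0 ≤ c₂ x y)
    (hc₂int₁ : Integrable fun y => c₂ y x) (hc₂int₂ : Integrable fun y => c₂ x y)
    (hc₂val₁ : (∫ y, c₂ y x) = C2) (hc₂val₂ : (∫ y, c₂ x y) = C2)
    (hφ₁meas : Measurable φ₁) (hφ₁nn : ∀ u, 0 ≤ φ₁ u)
    (hφ₂meas : Measurable φ₂) (hφ₂nn : ∀ u, 0 ≤ φ₂ u)
    {ρ : Rd d → ℝ} (hρm : Measurable ρ) (hρ0 : ∀ y, 0 ≤ ρ y) (hρB : ∀ y, ρ y ≤ B)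
    (hB : 0 ≤ B) :
    R2 c₁ c₂ φ₁ φ₂ ρ x ≤ 3/2 * C1 * B ^ 2 + 2 * C2 * B := by
  have habs : ∀ y, |ρ y| ≤ B := fun y => abs_le.2 ⟨by linarith [hρ0 y], hρB y⟩
  have hIx : 0 ≤ ∫ u, φ₁ (x - u) * ρ u := conv_nonneg hφ₁nn hρ0 x
  have hJx : 0 ≤ ∫ u, φ₂ (x - u) * ρ u := conv_nonneg hφ₂nn hρ0 x
  have hExp1 : Real.exp (-∫ u, φ₁ (x - u) * ρ u) ≤ 1 := Real.exp_le_one_iff.2 (by linarith)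
  have hExp2 : Real.exp (-∫ u, φ₂ (x - u) * ρ u) ≤ 1 := Real.exp_le_one_iff.2 (by linarith)
  unfold R2
  -- term 1
  have r1 : (∫ y, ∫ z, c₁ y z x * Real.exp (-∫ u, φ₁ (x - u) * ρ u) * ρ y * ρ z)
      = ∫ y, ∫ z, c₁ y z x * (Real.exp (-∫ u, φ₁ (x - u) * ρ u) * ρ y * ρ z) :=
    iint_congr fun y z => by ring
  have w1m : Measurable fun p : Rd d × Rd d =>
      Real.exp (-∫ u, φ₁ (x - u) * ρ u) * ρ p.1 * ρ p.2 :=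
    ((measurable_const.mul (hρm.comp measurable_fst)).mul (hρm.comp measurable_snd))
  have w1b : ∀ p : Rd d × Rd d,
      |Real.exp (-∫ u, φ₁ (x - u) * ρ u) * ρ p.1 * ρ p.2| ≤ B ^ 2 := fun p =>
    abs_exp_mul_le (Real.exp_pos _).le hExp1 (habs p.1) (habs p.2) hB
  have w1Int : Integrable (fun p : Rd d × Rd d =>
      c₁ p.1 p.2 x * (Real.exp (-∫ u, φ₁ (x - u) * ρ u) * ρ p.1 * ρ p.2)) :=
    prod_int_bdd_mul hc₁int₁₂ w1m.aestronglyMeasurable w1b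
  have conv1 : (∫ y, ∫ z, c₁ y z x * (Real.exp (-∫ u, φ₁ (x - u) * ρ u) * ρ y * ρ z))
      = ∫ p : Rd d × Rd d, c₁ p.1 p.2 x *
        (Real.exp (-∫ u, φ₁ (x - u) * ρ u) * ρ p.1 * ρ p.2) := iter_to_prod w1Int
  have val1' : (∫ y, ∫ z, c₁ y z x) = ∫ p : Rd d × Rd d, c₁ p.1 p.2 x :=
    iter_to_prod hc₁int₁₂
  have b1 : |∫ p : Rd d × Rd d, c₁ p.1 p.2 x *
      (Real.exp (-∫ u, φ₁ (x - u) * ρ u) * ρ p.1 * ρ p.2)| ≤ C1 * B ^ 2 :=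
    int_mul_le hc₁int₁₂ (fun p => hc₁nn _ _ _) (val1' ▸ hc₁val₁₂) (by positivity) w1b
  -- term 2
  have r2 : (∫ y, ∫ z, (c₁ x y z + c₁ y x z) *
        (1 - Real.exp (-∫ u, φ₁ (z - u) * ρ u)) * ρ x * ρ y)
      = ∫ y, ∫ z, 2 * c₁ x y z *
        ((1 - Real.exp (-∫ u, φ₁ (z - u) * ρ u)) * ρ x * ρ y) :=
    iint_congr fun y z => by rw [← hc₁sym x y z]; ring
  have cInt2 : Integrable (fun p : Rd d × Rd d => 2 * c₁ x p.1 p.2) := hc₁int₂₃.const_mul 2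
  have w2m : Measurable fun p : Rd d × Rd d =>
      (1 - Real.exp (-∫ u, φ₁ (p.2 - u) * ρ u)) * ρ x * ρ p.1 :=
    ((measurable_const.sub
        (((measurable_conv hφ₁meas hρm).comp measurable_snd).neg.exp)).mul
      measurable_const).mul (hρm.comp measurable_fst)
  have w2b : ∀ p : Rd d × Rd d,
      |(1 - Real.exp (-∫ u, φ₁ (p.2 - u) * ρ u)) * ρ x * ρ p.1| ≤ B ^ 2 := by
    intro p
    have hI := conv_nonneg hφ₁nn hρ0 p.2
    have hE : Real.exp (-∫ u, φ₁ (p.2 - u) * ρ u) ≤ 1 := Real.exp_le_one_iff.2 (by linarith)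
    exact abs_exp_mul_le (by nlinarith [Real.exp_pos (-∫ u, φ₁ (p.2 - u) * ρ u)])
      (by nlinarith [Real.exp_pos (-∫ u, φ₁ (p.2 - u) * ρ u)]) (habs x) (habs p.1) hB
  have w2Int : Integrable (fun p : Rd d × Rd d => 2 * c₁ x p.1 p.2 *
      ((1 - Real.exp (-∫ u, φ₁ (p.2 - u) * ρ u)) * ρ x * ρ p.1)) :=
    prod_int_bdd_mul cInt2 w2m.aestronglyMeasurable w2b
  have conv2 : (∫ y, ∫ z, 2 * c₁ x y z *
        ((1 - Real.exp (-∫ u, φ₁ (z - u) * ρ u)) * ρ x * ρ y))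
      = ∫ p : Rd d × Rd d, 2 * c₁ x p.1 p.2 *
        ((1 - Real.exp (-∫ u, φ₁ (p.2 - u) * ρ u)) * ρ x * ρ p.1) := iter_to_prod w2Int
  have val2' : (∫ y, ∫ z, 2 * c₁ x y z) = ∫ p : Rd d × Rd d, 2 * c₁ x p.1 p.2 :=
    iter_to_prod cInt2
  have b2 : |∫ p : Rd d × Rd d, 2 * c₁ x p.1 p.2 *
      ((1 - Real.exp (-∫ u, φ₁ (p.2 - u) * ρ u)) * ρ x * ρ p.1)| ≤ 2 * C1 * B ^ 2 :=
    int_mul_le cInt2 (fun p => by have := hc₁nn x p.1 p.2; linarith)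
      (val2' ▸ val2 hc₁int₂₃ hc₁val₂₃) (by positivity) w2b
  -- term 3
  have r3 : (∫ y, c₂ y x * Real.exp (-∫ u, φ₂ (x - u) * ρ u) * ρ y)
      = ∫ y, c₂ y x * (Real.exp (-∫ u, φ₂ (x - u) * ρ u) * ρ y) :=
    int_congr fun y => by ring
  have b3 : |∫ y, c₂ y x * (Real.exp (-∫ u, φ₂ (x - u) * ρ u) * ρ y)| ≤ C2 * B :=
    int_mul_le hc₂int₁ (fun y => hc₂nn _ _) hc₂val₁ hB fun y =>
      abs_exp_mul_le1 (Real.exp_pos _).le hExp2 (habs y)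
  -- term 4
  have r4 : (∫ y, c₂ x y * (1 - Real.exp (-∫ u, φ₂ (y - u) * ρ u)) * ρ x)
      = ∫ y, c₂ x y * ((1 - Real.exp (-∫ u, φ₂ (y - u) * ρ u)) * ρ x) :=
    int_congr fun y => by ring
  have b4 : |∫ y, c₂ x y * ((1 - Real.exp (-∫ u, φ₂ (y - u) * ρ u)) * ρ x)| ≤ C2 * B := by
    refine int_mul_le hc₂int₂ (fun y => hc₂nn _ _) hc₂val₂ hB fun y => ?_
    have hJ := conv_nonneg hφ₂nn hρ0 y
    have hE : Real.exp (-∫ u, φ₂ (y - u) * ρ u) ≤ 1 := Real.exp_le_one_iff.2 (by linarith)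
    exact abs_exp_mul_le1 (by nlinarith [Real.exp_pos (-∫ u, φ₂ (y - u) * ρ u)])
      (by nlinarith [Real.exp_pos (-∫ u, φ₂ (y - u) * ρ u)]) (habs x)
  rw [r1, conv1, r2, conv2, r3, r4]
  have l1 := (abs_le.1 b1).2
  have l2 := (abs_le.1 b2).2
  have l3 := (abs_le.1 b3).2
  have l4 := (abs_le.1 b4).2
  linarith

end R2sec

section R2diff
variable {d : ℕ} {c₁ : Rd d → Rd d → Rd d → ℝ} {c₂ : Rd d → Rd d → ℝ}
  {φ₁ φ₂ : Rd d → ℝ} {C1 C2 Φ₁ Φ₂ : ℝ}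

set_option maxHeartbeats 2000000 in
lemma R2_diff {x : Rd d} {R D : ℝ}
    (hc₁nn : ∀ x y z, 0 ≤ c₁ x y z) (hc₁sym : ∀ x y z, c₁ x y z = c₁ y x z)
    (hc₁int₁₂ : Integrable fun p : Rd d × Rd d => c₁ p.1 p.2 x)
    (hc₁int₂₃ : Integrable fun p : Rd d × Rd d => c₁ x p.1 p.2)
    (hc₁val₁₂ : (∫ y, ∫ z, c₁ y z x) = C1)
    (hc₁val₂₃ : (∫ y, ∫ z, c₁ x y z) = C1)
    (hc₂nn : ∀ x y, 0 ≤ c₂ x y)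
    (hc₂int₁ : Integrable fun y => c₂ y x) (hc₂int₂ : Integrable fun y => c₂ x y)
    (hc₂val₁ : (∫ y, c₂ y x) = C2) (hc₂val₂ : (∫ y, c₂ x y) = C2)
    (hφ₁meas : Measurable φ₁) (hφ₁nn : ∀ u, 0 ≤ φ₁ u)
    (hφ₁int : Integrable φ₁) (hφ₁val : (∫ u, φ₁ u) = Φ₁)
    (hφ₂meas : Measurable φ₂) (hφ₂nn : ∀ u, 0 ≤ φ₂ u)
    (hφ₂int : Integrable φ₂) (hφ₂val : (∫ u, φ₂ u) = Φ₂)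
    {ρ ψ : Rd d → ℝ} (hρm : Measurable ρ) (hψm : Measurable ψ)
    (hρ0 : ∀ y, 0 ≤ ρ y) (hψ0 : ∀ y, 0 ≤ ψ y)
    (hρR : ∀ y, ρ y ≤ R) (hψR : ∀ y, ψ y ≤ R)
    (hR : 0 ≤ R) (hD : 0 ≤ D) (hd : ∀ y, |ρ y - ψ y| ≤ D) :
    |R2 c₁ c₂ φ₁ φ₂ ρ x - R2 c₁ c₂ φ₁ φ₂ ψ x|
      ≤ 2 * C1 * R * D + 3/2 * C1 * Φ₁ * R ^ 2 * D + 2 * C2 * D + 2 * C2 * Φ₂ * R * D := by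
  have hΦ₁0 : 0 ≤ Φ₁ := hφ₁val ▸ integral_nonneg hφ₁nn
  have hΦ₂0 : 0 ≤ Φ₂ := hφ₂val ▸ integral_nonneg hφ₂nn
  have habsρ : ∀ y, |ρ y| ≤ R := fun y => abs_le.2 ⟨by linarith [hρ0 y], hρR y⟩
  have habsψ : ∀ y, |ψ y| ≤ R := fun y => abs_le.2 ⟨by linarith [hψ0 y], hψR y⟩
  -- convolution facts
  have hI0ρ : ∀ z, 0 ≤ ∫ u, φ₁ (z - u) * ρ u := conv_nonneg hφ₁nn hρ0
  have hI0ψ : ∀ z, 0 ≤ ∫ u, φ₁ (z - u) * ψ u := conv_nonneg hφ₁nn hψ0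
  have hJ0ρ : ∀ z, 0 ≤ ∫ u, φ₂ (z - u) * ρ u := conv_nonneg hφ₂nn hρ0
  have hJ0ψ : ∀ z, 0 ≤ ∫ u, φ₂ (z - u) * ψ u := conv_nonneg hφ₂nn hψ0
  have hIρR : ∀ z, (∫ u, φ₁ (z - u) * ρ u) ≤ Φ₁ * R :=
    conv_le hφ₁int hφ₁nn hφ₁val hρ0 hρR
  have hIψR : ∀ z, (∫ u, φ₁ (z - u) * ψ u) ≤ Φ₁ * R :=
    conv_le hφ₁int hφ₁nn hφ₁val hψ0 hψR
  have hIdiff : ∀ z, |(∫ u, φ₁ (z - u) * ρ u) - ∫ u, φ₁ (z - u) * ψ u| ≤ Φ₁ * D :=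
    conv_diff hφ₁int hφ₁nn hφ₁val hρm hψm habsρ habsψ hD hd
  have hJdiff : ∀ z, |(∫ u, φ₂ (z - u) * ρ u) - ∫ u, φ₂ (z - u) * ψ u| ≤ Φ₂ * D :=
    conv_diff hφ₂int hφ₂nn hφ₂val hρm hψm habsρ habsψ hD hd
  -- rewrite both R2's
  have rwR2 : ∀ ρ' : Rd d → ℝ, R2 c₁ c₂ φ₁ φ₂ ρ' x =
      1/2 * (∫ y, ∫ z, c₁ y z x * (Real.exp (-∫ u, φ₁ (x - u) * ρ' u) * ρ' y * ρ' z))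
      + 1/2 * (∫ y, ∫ z, 2 * c₁ x y z *
          ((1 - Real.exp (-∫ u, φ₁ (z - u) * ρ' u)) * ρ' x * ρ' y))
      + (∫ y, c₂ y x * (Real.exp (-∫ u, φ₂ (x - u) * ρ' u) * ρ' y))
      + ∫ y, c₂ x y * ((1 - Real.exp (-∫ u, φ₂ (y - u) * ρ' u)) * ρ' x) := by
    intro ρ'
    unfold R2
    rw [iint_congr (F := fun y z => c₁ y z x * Real.exp (-∫ u, φ₁ (x - u) * ρ' u) * ρ' y * ρ' z)
        (G := fun y z => c₁ y z x * (Real.exp (-∫ u, φ₁ (x - u) * ρ' u) * ρ' y * ρ' z))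
        (fun y z => by ring),
      iint_congr (F := fun y z => (c₁ x y z + c₁ y x z) *
          (1 - Real.exp (-∫ u, φ₁ (z - u) * ρ' u)) * ρ' x * ρ' y)
        (G := fun y z => 2 * c₁ x y z * ((1 - Real.exp (-∫ u, φ₁ (z - u) * ρ' u)) * ρ' x * ρ' y))
        (fun y z => by beta_reduce; rw [← hc₁sym x y z]; ring),
      int_congr (F := fun y => c₂ y x * Real.exp (-∫ u, φ₂ (x - u) * ρ' u) * ρ' y)
        (G := fun y => c₂ y x * (Real.exp (-∫ u, φ₂ (x - u) * ρ' u) * ρ' y))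
        (fun y => by ring),
      int_congr (F := fun y => c₂ x y * (1 - Real.exp (-∫ u, φ₂ (y - u) * ρ' u)) * ρ' x)
        (G := fun y => c₂ x y * ((1 - Real.exp (-∫ u, φ₂ (y - u) * ρ' u)) * ρ' x))
        (fun y => by ring)]
  -- integrability (8 statements)
  have cInt2 : Integrable (fun p : Rd d × Rd d => 2 * c₁ x p.1 p.2) := hc₁int₂₃.const_mul 2
  have w1mρ : Measurable fun p : Rd d × Rd d =>
      Real.exp (-∫ u, φ₁ (x - u) * ρ u) * ρ p.1 * ρ p.2 :=
    (measurable_const.mul (hρm.comp measurable_fst)).mul (hρm.comp measurable_snd)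
  have w1mψ : Measurable fun p : Rd d × Rd d =>
      Real.exp (-∫ u, φ₁ (x - u) * ψ u) * ψ p.1 * ψ p.2 :=
    (measurable_const.mul (hψm.comp measurable_fst)).mul (hψm.comp measurable_snd)
  have w1bρ : ∀ p : Rd d × Rd d,
      |Real.exp (-∫ u, φ₁ (x - u) * ρ u) * ρ p.1 * ρ p.2| ≤ R ^ 2 := fun p =>
    abs_exp_mul_le (Real.exp_pos _).le (Real.exp_le_one_iff.2 (by linarith [hI0ρ x]))
      (habsρ p.1) (habsρ p.2) hR
  have w1bψ : ∀ p : Rd d × Rd d,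
      |Real.exp (-∫ u, φ₁ (x - u) * ψ u) * ψ p.1 * ψ p.2| ≤ R ^ 2 := fun p =>
    abs_exp_mul_le (Real.exp_pos _).le (Real.exp_le_one_iff.2 (by linarith [hI0ψ x]))
      (habsψ p.1) (habsψ p.2) hR
  have w1Intρ := prod_int_bdd_mul hc₁int₁₂ w1mρ.aestronglyMeasurable w1bρ
  have w1Intψ := prod_int_bdd_mul hc₁int₁₂ w1mψ.aestronglyMeasurable w1bψ
  have w2mρ : Measurable fun p : Rd d × Rd d =>
      (1 - Real.exp (-∫ u, φ₁ (p.2 - u) * ρ u)) * ρ x * ρ p.1 :=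
    ((measurable_const.sub
        (((measurable_conv hφ₁meas hρm).comp measurable_snd).neg.exp)).mul
      measurable_const).mul (hρm.comp measurable_fst)
  have w2mψ : Measurable fun p : Rd d × Rd d =>
      (1 - Real.exp (-∫ u, φ₁ (p.2 - u) * ψ u)) * ψ x * ψ p.1 :=
    ((measurable_const.sub
        (((measurable_conv hφ₁meas hψm).comp measurable_snd).neg.exp)).mul
      measurable_const).mul (hψm.comp measurable_fst)
  have one_sub_exp : ∀ {I : ℝ}, 0 ≤ I → |1 - Real.exp (-I)| ≤ 1 := by
    intro I hI
    have h1 : Real.exp (-I) ≤ 1 := Real.exp_le_one_iff.2 (by linarith)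
    rw [abs_of_nonneg (by linarith)]
    nlinarith [Real.exp_pos (-I)]
  have w2bρ : ∀ p : Rd d × Rd d,
      |(1 - Real.exp (-∫ u, φ₁ (p.2 - u) * ρ u)) * ρ x * ρ p.1| ≤ R ^ 2 := by
    intro p
    rw [abs_mul, abs_mul, sq]
    calc |1 - Real.exp (-∫ u, φ₁ (p.2 - u) * ρ u)| * |ρ x| * |ρ p.1| ≤ 1 * R * R := by
          apply mul_le_mul (mul_le_mul (one_sub_exp (hI0ρ p.2)) (habsρ x) (abs_nonneg _)
            (by norm_num)) (habsρ p.1) (abs_nonneg _)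
          positivity
      _ = R * R := by ring
  have w2bψ : ∀ p : Rd d × Rd d,
      |(1 - Real.exp (-∫ u, φ₁ (p.2 - u) * ψ u)) * ψ x * ψ p.1| ≤ R ^ 2 := by
    intro p
    rw [abs_mul, abs_mul, sq]
    calc |1 - Real.exp (-∫ u, φ₁ (p.2 - u) * ψ u)| * |ψ x| * |ψ p.1| ≤ 1 * R * R := by
          apply mul_le_mul (mul_le_mul (one_sub_exp (hI0ψ p.2)) (habsψ x) (abs_nonneg _)
            (by norm_num)) (habsψ p.1) (abs_nonneg _)
          positivity
      _ = R * R := by ring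
  have w2Intρ := prod_int_bdd_mul cInt2 w2mρ.aestronglyMeasurable w2bρ
  have w2Intψ := prod_int_bdd_mul cInt2 w2mψ.aestronglyMeasurable w2bψ
  -- conversions to product integrals
  have conv1ρ : (∫ y, ∫ z, c₁ y z x * (Real.exp (-∫ u, φ₁ (x - u) * ρ u) * ρ y * ρ z))
      = ∫ p : Rd d × Rd d, c₁ p.1 p.2 x *
        (Real.exp (-∫ u, φ₁ (x - u) * ρ u) * ρ p.1 * ρ p.2) := iter_to_prod w1Intρ
  have conv1ψ : (∫ y, ∫ z, c₁ y z x * (Real.exp (-∫ u, φ₁ (x - u) * ψ u) * ψ y * ψ z))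
      = ∫ p : Rd d × Rd d, c₁ p.1 p.2 x *
        (Real.exp (-∫ u, φ₁ (x - u) * ψ u) * ψ p.1 * ψ p.2) := iter_to_prod w1Intψ
  have conv2ρ : (∫ y, ∫ z, 2 * c₁ x y z *
        ((1 - Real.exp (-∫ u, φ₁ (z - u) * ρ u)) * ρ x * ρ y))
      = ∫ p : Rd d × Rd d, 2 * c₁ x p.1 p.2 *
        ((1 - Real.exp (-∫ u, φ₁ (p.2 - u) * ρ u)) * ρ x * ρ p.1) := iter_to_prod w2Intρ
  have conv2ψ : (∫ y, ∫ z, 2 * c₁ x y z *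
        ((1 - Real.exp (-∫ u, φ₁ (z - u) * ψ u)) * ψ x * ψ y))
      = ∫ p : Rd d × Rd d, 2 * c₁ x p.1 p.2 *
        ((1 - Real.exp (-∫ u, φ₁ (p.2 - u) * ψ u)) * ψ x * ψ p.1) := iter_to_prod w2Intψ
  have val1' : (∫ y, ∫ z, c₁ y z x) = ∫ p : Rd d × Rd d, c₁ p.1 p.2 x :=
    iter_to_prod hc₁int₁₂
  have val2'' : (∫ y, ∫ z, 2 * c₁ x y z) = ∫ p : Rd d × Rd d, 2 * c₁ x p.1 p.2 :=
    iter_to_prod cInt2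
  -- term 1 bound
  have d1 : |(∫ p : Rd d × Rd d, c₁ p.1 p.2 x *
        (Real.exp (-∫ u, φ₁ (x - u) * ρ u) * ρ p.1 * ρ p.2))
      - ∫ p : Rd d × Rd d, c₁ p.1 p.2 x *
        (Real.exp (-∫ u, φ₁ (x - u) * ψ u) * ψ p.1 * ψ p.2)|
      ≤ C1 * (2 * (R * D) + (Φ₁ * D) * R ^ 2) := by
    refine int_diff_le hc₁int₁₂ (fun p => hc₁nn _ _ _) (val1' ▸ hc₁val₁₂) (by positivity)
      w1Intρ w1Intψ fun p => ?_
    exact term1_scalar hR (by positivity) (hI0ρ x) (hI0ψ x) (hIdiff x)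
      (habsρ p.1) (habsψ p.1) (habsψ p.2) (hd p.1) (hd p.2)
  -- term 2 bound
  have d2 : |(∫ p : Rd d × Rd d, 2 * c₁ x p.1 p.2 *
        ((1 - Real.exp (-∫ u, φ₁ (p.2 - u) * ρ u)) * ρ x * ρ p.1))
      - ∫ p : Rd d × Rd d, 2 * c₁ x p.1 p.2 *
        ((1 - Real.exp (-∫ u, φ₁ (p.2 - u) * ψ u)) * ψ x * ψ p.1)|
      ≤ 2 * C1 * (D * R * (1 + Φ₁ * R)) := by
    refine int_diff_le cInt2 (fun p => by have := hc₁nn x p.1 p.2; linarith)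
      (val2'' ▸ val2 hc₁int₂₃ hc₁val₂₃) (by positivity) w2Intρ w2Intψ fun p => ?_
    exact term2_scalar hR hD hΦ₁0 (hI0ρ p.2) (hIρR p.2) (hI0ψ p.2) (hIψR p.2) (hIdiff p.2)
      (habsρ x) (habsρ p.1) (habsψ x) (habsψ p.1) (hd x) (hd p.1)
  -- term 3 bound
  have w3Intρ : Integrable (fun y => c₂ y x * (Real.exp (-∫ u, φ₂ (x - u) * ρ u) * ρ y)) :=
    prod_int_bdd_mul hc₂int₁ (measurable_const.mul hρm).aestronglyMeasurable
      (fun y => abs_exp_mul_le1 (Real.exp_pos _).le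
        (Real.exp_le_one_iff.2 (by linarith [hJ0ρ x])) (habsρ y))
  have w3Intψ : Integrable (fun y => c₂ y x * (Real.exp (-∫ u, φ₂ (x - u) * ψ u) * ψ y)) :=
    prod_int_bdd_mul hc₂int₁ (measurable_const.mul hψm).aestronglyMeasurable
      (fun y => abs_exp_mul_le1 (Real.exp_pos _).le
        (Real.exp_le_one_iff.2 (by linarith [hJ0ψ x])) (habsψ y))
  have d3 : |(∫ y, c₂ y x * (Real.exp (-∫ u, φ₂ (x - u) * ρ u) * ρ y))
      - ∫ y, c₂ y x * (Real.exp (-∫ u, φ₂ (x - u) * ψ u) * ψ y)|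
      ≤ C2 * (D + (Φ₂ * D) * R) := by
    refine int_diff_le hc₂int₁ (fun y => hc₂nn _ _) hc₂val₁ (by positivity)
      w3Intρ w3Intψ fun y => ?_
    exact term3_scalar hR (by positivity) (hJ0ρ x) (hJ0ψ x) (hJdiff x) (habsψ y) (hd y)
  -- term 4 bound
  have w4mρ : Measurable fun y : Rd d =>
      (1 - Real.exp (-∫ u, φ₂ (y - u) * ρ u)) * ρ x :=
    (measurable_const.sub ((measurable_conv hφ₂meas hρm).neg.exp)).mul measurable_const
  have w4mψ : Measurable fun y : Rd d =>
      (1 - Real.exp (-∫ u, φ₂ (y - u) * ψ u)) * ψ x :=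
    (measurable_const.sub ((measurable_conv hφ₂meas hψm).neg.exp)).mul measurable_const
  have w4Intρ : Integrable (fun y => c₂ x y * ((1 - Real.exp (-∫ u, φ₂ (y - u) * ρ u)) * ρ x)) :=
    prod_int_bdd_mul hc₂int₂ w4mρ.aestronglyMeasurable
      (fun y => abs_exp_mul_le1 (by
          have h1 : Real.exp (-∫ u, φ₂ (y - u) * ρ u) ≤ 1 :=
            Real.exp_le_one_iff.2 (by linarith [hJ0ρ y])
          linarith)
        (by nlinarith [Real.exp_pos (-∫ u, φ₂ (y - u) * ρ u)]) (habsρ x))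
  have w4Intψ : Integrable (fun y => c₂ x y * ((1 - Real.exp (-∫ u, φ₂ (y - u) * ψ u)) * ψ x)) :=
    prod_int_bdd_mul hc₂int₂ w4mψ.aestronglyMeasurable
      (fun y => abs_exp_mul_le1 (by
          have h1 : Real.exp (-∫ u, φ₂ (y - u) * ψ u) ≤ 1 :=
            Real.exp_le_one_iff.2 (by linarith [hJ0ψ y])
          linarith)
        (by nlinarith [Real.exp_pos (-∫ u, φ₂ (y - u) * ψ u)]) (habsψ x))
  have d4 : |(∫ y, c₂ x y * ((1 - Real.exp (-∫ u, φ₂ (y - u) * ρ u)) * ρ x))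
      - ∫ y, c₂ x y * ((1 - Real.exp (-∫ u, φ₂ (y - u) * ψ u)) * ψ x)|
      ≤ C2 * (D + (Φ₂ * D) * R) := by
    refine int_diff_le hc₂int₂ (fun y => hc₂nn _ _) hc₂val₂ (by positivity)
      w4Intρ w4Intψ fun y => ?_
    exact term4_scalar hR (by positivity) (hJ0ρ y) (hJ0ψ y) (hJdiff y) (habsψ x) (hd x)
  -- assemble
  rw [rwR2 ρ, rwR2 ψ, conv1ρ, conv1ψ, conv2ρ, conv2ψ]
  have e1 := abs_le.1 d1
  have e2 := abs_le.1 d2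
  have e3 := abs_le.1 d3
  have e4 := abs_le.1 d4
  rw [abs_le]
  constructor <;> nlinarith [e1.1, e1.2, e2.1, e2.2, e3.1, e3.2, e4.1, e4.2]

section ContSec
variable {d : ℕ}

lemma le_linf_mem {f : Rd d → ℝ} (hf : MemLinf f) (y : Rd d) : |f y| ≤ linf f := by
  obtain ⟨-, M, hM⟩ := hf
  exact le_linf hM y

lemma le_linf_diff {f g : Rd d → ℝ} (hf : MemLinf f) (hg : MemLinf g) (y : Rd d) :
    |f y - g y| ≤ linf (fun x => f x - g x) := by
  obtain ⟨-, Mf, hMf⟩ := hf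
  obtain ⟨-, Mg, hMg⟩ := hg
  exact le_linf (M := Mf + Mg)
    (fun x => (abs_sub _ _).trans (add_le_add (hMf x) (hMg x))) y

lemma linf_bound_of_cont {T : ℝ} (hT : 0 ≤ T) {ρ : ℝ → Rd d → ℝ}
    (hcont : LinfContOn (Icc 0 T) ρ) (hmem : ∀ t ∈ Icc (0:ℝ) T, MemLinf (ρ t)) :
    ∃ K, 0 ≤ K ∧ ∀ t ∈ Icc (0:ℝ) T, linf (ρ t) ≤ K := by
  have H : ∀ u : Icc (0:ℝ) T, ∃ δ > 0, ∀ s ∈ Icc (0:ℝ) T, |s - u.1| < δ →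
      linf (fun x => ρ s x - ρ u.1 x) < 1 := fun u => hcont u.1 u.2 1 one_pos
  choose δf hδpos hδ using H
  obtain ⟨F, hF⟩ := isCompact_Icc.elim_finite_subcover
    (fun u : Icc (0:ℝ) T => Ioo (u.1 - δf u) (u.1 + δf u)) (fun u => isOpen_Ioo)
    (fun s hs => mem_iUnion.2 ⟨⟨s, hs⟩, by simp [hδpos ⟨s, hs⟩]⟩)
  have h0 : (0 : ℝ) ∈ Icc (0:ℝ) T := ⟨le_rfl, hT⟩
  have hFne : F.Nonempty := by
    by_contra h
    rw [Finset.not_nonempty_iff_eq_empty] at h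
    have := hF h0
    simp [h] at this
  set K0 := F.sup' hFne (fun u => linf (ρ u.1)) with hK0
  refine ⟨max (K0 + 1) 0, le_max_right _ _, fun s hs => ?_⟩
  have hmem2 := hF hs
  rw [mem_iUnion₂] at hmem2
  obtain ⟨u, huF, hu⟩ := hmem2
  have hnear : |s - u.1| < δf u := by
    rw [abs_lt]; constructor <;> [linarith [hu.1]; linarith [hu.2]]
  have hlt := hδ u s hs hnear
  have hbound : ∀ y, |ρ s y| ≤ linf (ρ u.1) + 1 := by
    intro y
    have h1 : |ρ s y| ≤ |ρ s y - ρ u.1 y| + |ρ u.1 y| := by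
      have := abs_sub_abs_le_abs_sub (ρ s y) (ρ u.1 y); linarith [abs_nonneg (ρ u.1 y)]
    have h2 := le_linf_diff (hmem s hs) (hmem u.1 u.2) y
    have h3 := le_linf_mem (hmem u.1 u.2) y
    linarith
  refine (linf_le hbound).trans (le_trans ?_ (le_max_left _ _))
  have := Finset.le_sup' (fun u : Icc (0:ℝ) T => linf (ρ u.1)) huF
  rw [hK0]; linarith

lemma normTg_nonneg {T γ C2 : ℝ} (ρ : ℝ → Rd d → ℝ) : 0 ≤ normTg T γ C2 ρ :=
  Real.iSup_nonneg fun u => mul_nonneg (Real.exp_pos _).le (linf_nonneg _)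

lemma normTg_ge {T γ C2 K : ℝ} {ρ : ℝ → Rd d → ℝ}
    (hK : ∀ u ∈ Icc (0:ℝ) T, linf (ρ u) ≤ K) {s : ℝ} (hs : s ∈ Icc (0:ℝ) T)
    (hγC2 : 0 ≤ γ * C2) :
    Real.exp (-(γ * C2 * s)) * linf (ρ s) ≤ normTg T γ C2 ρ := by
  refine le_ciSup (f := fun u : Icc (0:ℝ) T => Real.exp (-(γ * C2 * u.1)) * linf (ρ u.1))
    ⟨max K 0, ?_⟩ ⟨s, hs⟩
  rintro _ ⟨u, rfl⟩
  have h1 : Real.exp (-(γ * C2 * u.1)) ≤ 1 :=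
    Real.exp_le_one_iff.2 (by have := mul_nonneg hγC2 u.2.1; linarith)
  have h2 : linf (ρ u.1) ≤ max K 0 := (hK u.1 u.2).trans (le_max_left _ _)
  have h3 := linf_nonneg (ρ u.1)
  calc Real.exp (-(γ * C2 * u.1)) * linf (ρ u.1) ≤ 1 * linf (ρ u.1) := by
        exact mul_le_mul_of_nonneg_right h1 h3
    _ = linf (ρ u.1) := by ring
    _ ≤ max K 0 := h2

lemma linf_le_of_normTg {T γ C2 K r : ℝ} {ρ : ℝ → Rd d → ℝ}
    (hK : ∀ u ∈ Icc (0:ℝ) T, linf (ρ u) ≤ K) (hnorm : normTg T γ C2 ρ ≤ r)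
    {s : ℝ} (hs : s ∈ Icc (0:ℝ) T) (hγC2 : 0 ≤ γ * C2) :
    linf (ρ s) ≤ Real.exp (γ * C2 * s) * r := by
  have h := (normTg_ge hK hs hγC2).trans hnorm
  have hid : Real.exp (γ * C2 * s) * Real.exp (-(γ * C2 * s)) = 1 := by
    rw [← Real.exp_add]; simp
  nlinarith [mul_le_mul_of_nonneg_left h (Real.exp_nonneg (γ * C2 * s)),
    Real.exp_pos (γ * C2 * s), linf_nonneg (ρ s)]

lemma contOn_of_lip {f : ℝ → ℝ} {S : Set ℝ} {L : ℝ} (hL : 0 ≤ L)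
    (h : ∀ s ∈ S, ∀ u ∈ S, |f s - f u| ≤ L * |s - u|) : ContinuousOn f S := by
  rw [Metric.continuousOn_iff]
  intro u hu ε hε
  refine ⟨ε / (L + 1), by positivity, fun s hs hd => ?_⟩
  rw [Real.dist_eq] at hd ⊢
  have h1 := h s hs u hu
  have h2 : L * |s - u| ≤ L * (ε / (L + 1)) := mul_le_mul_of_nonneg_left hd.le hL
  have h3 : L * (ε / (L + 1)) < ε := by
    have hL1 : (0:ℝ) < L + 1 := by linarith
    have hq : ε / (L + 1) * (L + 1) = ε := div_mul_cancel₀ _ (ne_of_gt hL1)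
    nlinarith [div_pos hε hL1]
  linarith

lemma contOn_of_linf_lip {T : ℝ} {ρ : ℝ → Rd d → ℝ} {f : ℝ → ℝ} {L : ℝ} (hL : 0 ≤ L)
    (hcont : LinfContOn (Icc 0 T) ρ)
    (h : ∀ s ∈ Icc (0:ℝ) T, ∀ u ∈ Icc (0:ℝ) T,
      |f s - f u| ≤ L * linf (fun x => ρ s x - ρ u x)) :
    ContinuousOn f (Icc 0 T) := by
  rw [Metric.continuousOn_iff]
  intro u hu ε hε
  obtain ⟨δ, hδ0, hδ⟩ := hcont u hu (ε / (L + 1)) (by positivity)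
  refine ⟨δ, hδ0, fun s hs hd => ?_⟩
  rw [Real.dist_eq] at hd ⊢
  have h1 := h s hs u hu
  have h2 := hδ s hs hd
  have hlnn : 0 ≤ linf (fun x => ρ s x - ρ u x) := linf_nonneg _
  have h3 : L * linf (fun x => ρ s x - ρ u x) ≤ L * (ε / (L + 1)) :=
    mul_le_mul_of_nonneg_left h2.le hL
  have h4 : L * (ε / (L + 1)) < ε := by
    have hL1 : (0:ℝ) < L + 1 := by linarith
    have hq : ε / (L + 1) * (L + 1) = ε := div_mul_cancel₀ _ (ne_of_gt hL1)
    nlinarith [div_pos hε hL1]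
  linarith

end ContSec

set_option maxHeartbeats 4000000 in
theorem statement15 {d : ℕ} (hd : 1 ≤ d)
    (c₁ : Rd d → Rd d → Rd d → ℝ) (C1 : ℝ)
    (hc₁meas : Measurable fun p : Rd d × Rd d × Rd d => c₁ p.1 p.2.1 p.2.2)
    (hc₁nn : ∀ x y z, 0 ≤ c₁ x y z)
    (hc₁sym : ∀ x y z, c₁ x y z = c₁ y x z)
    (hc₁int₁₂ : ∀ z, Integrable fun p : Rd d × Rd d => c₁ p.1 p.2 z)
    (hc₁int₁₃ : ∀ y, Integrable fun p : Rd d × Rd d => c₁ p.1 y p.2)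
    (hc₁int₂₃ : ∀ x, Integrable fun p : Rd d × Rd d => c₁ x p.1 p.2)
    (hc₁val₁₂ : ∀ z, (∫ x, ∫ y, c₁ x y z) = C1)
    (hc₁val₁₃ : ∀ y, (∫ x, ∫ z, c₁ x y z) = C1)
    (hc₁val₂₃ : ∀ x, (∫ y, ∫ z, c₁ x y z) = C1)
    (c₂ : Rd d → Rd d → ℝ) (C2 : ℝ)
    (hc₂meas : Measurable fun p : Rd d × Rd d => c₂ p.1 p.2)
    (hc₂nn : ∀ x y, 0 ≤ c₂ x y)
    (hc₂int₁ : ∀ y, Integrable fun x => c₂ x y)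
    (hc₂int₂ : ∀ x, Integrable fun y => c₂ x y)
    (hc₂val₁ : ∀ y, (∫ x, c₂ x y) = C2)
    (hc₂val₂ : ∀ x, (∫ y, c₂ x y) = C2)
    (φ₁ : Rd d → ℝ) (Φ₁ : ℝ) (hφ₁meas : Measurable φ₁) (hφ₁nn : ∀ u, 0 ≤ φ₁ u)
    (hφ₁int : Integrable φ₁) (hφ₁val : (∫ u, φ₁ u) = Φ₁)
    (φ₂ : Rd d → ℝ) (Φ₂ : ℝ) (hφ₂meas : Measurable φ₂) (hφ₂nn : ∀ u, 0 ≤ φ₂ u)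
    (hφ₂int : Integrable φ₂) (hφ₂val : (∫ u, φ₂ u) = Φ₂)
    (r γ T' : ℝ) (hr : 0 < r) (hγ : 0 < γ) (hT' : 0 < T')
    (ρ₀ : Rd d → ℝ) (hρ₀mem : MemLinf ρ₀) (hρ₀nn : ∀ x, 0 ≤ ρ₀ x)
    (hρ₀r : linf ρ₀ ≤ r)
    (ρ ψ : ℝ → Rd d → ℝ) (hρ : memB T' γ C2 r ρ) (hψ : memB T' γ C2 r ψ)
    (hρ0 : ρ 0 = ρ₀) (hψ0 : ψ 0 = ρ₀) :
    ∀ t ∈ Icc (0:ℝ) T', ∀ x : Rd d,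
      |Fmap c₁ c₂ φ₁ φ₂ C2 ρ₀ ρ t x - Fmap c₁ c₂ φ₁ φ₂ C2 ρ₀ ψ t x|
        ≤ Real.exp (γ * C2 * t) *
            (t * (3/2 * r^2 * C1 * Real.exp (2 * γ * C2 * t) * (C1 * t + Φ₁)
              + r * Real.exp (γ * C2 * t) * (2 * C1 * C2 * t + 3 * C1 + 2 * C2 * Φ₂)
              + 2 * C2))
          * normTg T' γ C2 (fun t x => ρ t x - ψ t x) := by
  intro t ht x
  obtain ⟨hρcont, hρmem, hρnn, hρnorm⟩ := hρ
  obtain ⟨hψcont, hψmem, hψnn, hψnorm⟩ := hψ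
  obtain ⟨ht0, htT⟩ := ht
  have hC1 : 0 ≤ C1 := (hc₁val₂₃ x) ▸
    integral_nonneg fun y => integral_nonneg fun z => hc₁nn x y z
  have hC2 : 0 ≤ C2 := (hc₂val₂ x) ▸ integral_nonneg fun y => hc₂nn x y
  have hΦ₁0 : 0 ≤ Φ₁ := hφ₁val ▸ integral_nonneg hφ₁nn
  have hΦ₂0 : 0 ≤ Φ₂ := hφ₂val ▸ integral_nonneg hφ₂nn
  have hγC2 : 0 ≤ γ * C2 := mul_nonneg hγ.le hC2
  -- global bounds on the curves
  obtain ⟨Kρ, hKρ0, hKρ⟩ := linf_bound_of_cont hT'.le hρcont hρmem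
  obtain ⟨Kψ, hKψ0, hKψ⟩ := linf_bound_of_cont hT'.le hψcont hψmem
  set Rm := r * Real.exp (γ * C2 * T') with hRm
  have hRm0 : 0 ≤ Rm := by positivity
  have hρbd : ∀ s ∈ Icc (0:ℝ) T', ∀ y, |ρ s y| ≤ Real.exp (γ * C2 * s) * r :=
    fun s hs y => (le_linf_mem (hρmem s hs) y).trans (linf_le_of_normTg hKρ hρnorm hs hγC2)
  have hψbd : ∀ s ∈ Icc (0:ℝ) T', ∀ y, |ψ s y| ≤ Real.exp (γ * C2 * s) * r :=
    fun s hs y => (le_linf_mem (hψmem s hs) y).trans (linf_le_of_normTg hKψ hψnorm hs hγC2)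
  have hexpT : ∀ s ∈ Icc (0:ℝ) T', Real.exp (γ * C2 * s) ≤ Real.exp (γ * C2 * T') :=
    fun s hs => Real.exp_le_exp.2 (mul_le_mul_of_nonneg_left hs.2 hγC2)
  have hρRm : ∀ s ∈ Icc (0:ℝ) T', ∀ y, |ρ s y| ≤ Rm := by
    intro s hs y
    refine (hρbd s hs y).trans ?_
    rw [hRm]
    nlinarith [hexpT s hs, Real.exp_pos (γ * C2 * s), hr.le]
  have hψRm : ∀ s ∈ Icc (0:ℝ) T', ∀ y, |ψ s y| ≤ Rm := by
    intro s hs y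
    refine (hψbd s hs y).trans ?_
    rw [hRm]
    nlinarith [hexpT s hs, Real.exp_pos (γ * C2 * s), hr.le]
  -- the weighted norm of the difference
  set N := normTg T' γ C2 (fun t x => ρ t x - ψ t x) with hN
  have hN0 : 0 ≤ N := normTg_nonneg _
  have hdiffK : ∀ u ∈ Icc (0:ℝ) T', linf (fun y => ρ u y - ψ u y) ≤ Kρ + Kψ := by
    intro u hu
    refine linf_le fun y => ?_
    have h1 := le_linf_mem (hρmem u hu) y
    have h2 := le_linf_mem (hψmem u hu) y
    have h3 := abs_sub (ρ u y) (ψ u y)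
    linarith [hKρ u hu, hKψ u hu]
  have hdifflinf : ∀ s ∈ Icc (0:ℝ) T',
      linf (fun y => ρ s y - ψ s y) ≤ Real.exp (γ * C2 * s) * N := by
    intro s hs
    have h := (normTg_ge hdiffK hs hγC2).trans_eq hN.symm
    have hid : Real.exp (γ * C2 * s) * Real.exp (-(γ * C2 * s)) = 1 := by
      rw [← Real.exp_add]; simp
    nlinarith [mul_le_mul_of_nonneg_left h (Real.exp_nonneg (γ * C2 * s)),
      linf_nonneg (fun y => ρ s y - ψ s y), Real.exp_pos (γ * C2 * s)]
  have hdiffbd : ∀ s ∈ Icc (0:ℝ) T', ∀ y, |ρ s y - ψ s y| ≤ Real.exp (γ * C2 * s) * N :=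
    fun s hs y => (le_linf_diff (hρmem s hs) (hψmem s hs) y).trans (hdifflinf s hs)
  -- abbreviations tied to the final time t
  set E := Real.exp (γ * C2 * t) with hE
  have hE0 : 0 < E := hE ▸ Real.exp_pos _
  have hE1 : 1 ≤ E := hE ▸ Real.one_le_exp (mul_nonneg hγC2 ht0)
  set R := r * E with hR
  set D := E * N with hD
  have hR0 : 0 ≤ R := by rw [hR]; positivity
  have hD0 : 0 ≤ D := by rw [hD]; positivity
  have hIccsub : Icc (0:ℝ) t ⊆ Icc (0:ℝ) T' := Icc_subset_Icc le_rfl htT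
  have htmem : t ∈ Icc (0:ℝ) T' := ⟨ht0, htT⟩
  have hsE : ∀ s ∈ Icc (0:ℝ) t, Real.exp (γ * C2 * s) ≤ E :=
    fun s hs => hE ▸ Real.exp_le_exp.2 (mul_le_mul_of_nonneg_left hs.2 hγC2)
  have hρbt : ∀ s ∈ Icc (0:ℝ) t, ∀ y, |ρ s y| ≤ R := by
    intro s hs y
    refine (hρbd s (hIccsub hs) y).trans ?_
    rw [hR]
    nlinarith [hsE s hs, Real.exp_pos (γ * C2 * s), hr.le]
  have hψbt : ∀ s ∈ Icc (0:ℝ) t, ∀ y, |ψ s y| ≤ R := by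
    intro s hs y
    refine (hψbd s (hIccsub hs) y).trans ?_
    rw [hR]
    nlinarith [hsE s hs, Real.exp_pos (γ * C2 * s), hr.le]
  have hdbt : ∀ s ∈ Icc (0:ℝ) t, ∀ y, |ρ s y - ψ s y| ≤ D := by
    intro s hs y
    refine (hdiffbd s (hIccsub hs) y).trans ?_
    rw [hD]
    nlinarith [hsE s hs, Real.exp_pos (γ * C2 * s), hN0]
  -- continuity of the hker curves
  have lipKerρ : ∀ s ∈ Icc (0:ℝ) T', ∀ u ∈ Icc (0:ℝ) T',
      |hker c₁ C2 (ρ s) x - hker c₁ C2 (ρ u) x|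
        ≤ C1 * linf (fun y => ρ s y - ρ u y) := fun s hs u hu =>
    hker_diff hc₁nn hc₁sym (hc₁int₂₃ x) (hc₁val₂₃ x) (hρmem s hs).1 (hρmem u hu).1
      (hρRm s hs) (hρRm u hu) (linf_nonneg _)
      (fun y => le_linf_diff (hρmem s hs) (hρmem u hu) y)
  have lipKerψ : ∀ s ∈ Icc (0:ℝ) T', ∀ u ∈ Icc (0:ℝ) T',
      |hker c₁ C2 (ψ s) x - hker c₁ C2 (ψ u) x|
        ≤ C1 * linf (fun y => ψ s y - ψ u y) := fun s hs u hu =>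
    hker_diff hc₁nn hc₁sym (hc₁int₂₃ x) (hc₁val₂₃ x) (hψmem s hs).1 (hψmem u hu).1
      (hψRm s hs) (hψRm u hu) (linf_nonneg _)
      (fun y => le_linf_diff (hψmem s hs) (hψmem u hu) y)
  have contKerρ : ContinuousOn (fun σ => hker c₁ C2 (ρ σ) x) (Icc 0 T') :=
    contOn_of_linf_lip hC1 hρcont lipKerρ
  have contKerψ : ContinuousOn (fun σ => hker c₁ C2 (ψ σ) x) (Icc 0 T') :=
    contOn_of_linf_lip hC1 hψcont lipKerψ
  have iiKerρ : ∀ a ∈ Icc (0:ℝ) T', ∀ b ∈ Icc (0:ℝ) T',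
      IntervalIntegrable (fun σ => hker c₁ C2 (ρ σ) x) volume a b := fun a ha b hb =>
    (contKerρ.mono (uIcc_subset_Icc ha hb)).intervalIntegrable
  have iiKerψ : ∀ a ∈ Icc (0:ℝ) T', ∀ b ∈ Icc (0:ℝ) T',
      IntervalIntegrable (fun σ => hker c₁ C2 (ψ σ) x) volume a b := fun a ha b hb =>
    (contKerψ.mono (uIcc_subset_Icc ha hb)).intervalIntegrable
  have hKerlowρ : ∀ σ ∈ Icc (0:ℝ) T', C2 ≤ hker c₁ C2 (ρ σ) x :=
    fun σ hσ => hker_lower hc₁nn (ρ σ) (hρnn σ hσ) x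
  have hKerlowψ : ∀ σ ∈ Icc (0:ℝ) T', C2 ≤ hker c₁ C2 (ψ σ) x :=
    fun σ hσ => hker_lower hc₁nn (ψ σ) (hψnn σ hσ) x
  have hKerupρ : ∀ σ ∈ Icc (0:ℝ) T', hker c₁ C2 (ρ σ) x ≤ C2 + C1 * Rm :=
    fun σ hσ => hker_upper hc₁nn hc₁sym (hc₁int₂₃ x) (hc₁val₂₃ x) (hρmem σ hσ).1
      (hρRm σ hσ) hRm0
  have hKerupψ : ∀ σ ∈ Icc (0:ℝ) T', hker c₁ C2 (ψ σ) x ≤ C2 + C1 * Rm :=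
    fun σ hσ => hker_upper hc₁nn hc₁sym (hc₁int₂₃ x) (hc₁val₂₃ x) (hψmem σ hσ).1
      (hψRm σ hσ) hRm0
  -- nonnegativity of the H integrals
  have hsubmem : ∀ s ∈ Icc (0:ℝ) t, ∀ σ ∈ Icc s t, σ ∈ Icc (0:ℝ) T' :=
    fun s hs σ hσ => ⟨le_trans hs.1 hσ.1, le_trans hσ.2 htT⟩
  have hHρ0 : ∀ s ∈ Icc (0:ℝ) t, 0 ≤ ∫ σ in s..t, hker c₁ C2 (ρ σ) x := by
    intro s hs
    exact intervalIntegral.integral_nonneg hs.2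
      fun σ hσ => le_trans hC2 (hKerlowρ σ (hsubmem s hs σ hσ))
  have hHψ0 : ∀ s ∈ Icc (0:ℝ) t, 0 ≤ ∫ σ in s..t, hker c₁ C2 (ψ σ) x := by
    intro s hs
    exact intervalIntegral.integral_nonneg hs.2
      fun σ hσ => le_trans hC2 (hKerlowψ σ (hsubmem s hs σ hσ))
  -- difference of the H integrals
  have hHdiff : ∀ s ∈ Icc (0:ℝ) t,
      |(∫ σ in s..t, hker c₁ C2 (ρ σ) x) - ∫ σ in s..t, hker c₁ C2 (ψ σ) x|
        ≤ C1 * D * t := by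
    intro s hs
    rw [← intervalIntegral.integral_sub (iiKerρ s (hIccsub hs) t htmem)
      (iiKerψ s (hIccsub hs) t htmem)]
    have hb : ∀ σ ∈ Set.uIoc s t,
        ‖hker c₁ C2 (ρ σ) x - hker c₁ C2 (ψ σ) x‖ ≤ C1 * D := by
      intro σ hσ
      rw [uIoc_of_le hs.2] at hσ
      have hσt : σ ∈ Icc (0:ℝ) t := ⟨le_trans hs.1 hσ.1.le, hσ.2⟩
      have hσT : σ ∈ Icc (0:ℝ) T' := hIccsub hσt
      rw [Real.norm_eq_abs]
      exact hker_diff hc₁nn hc₁sym (hc₁int₂₃ x) (hc₁val₂₃ x) (hρmem σ hσT).1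
        (hψmem σ hσT).1 (hρRm σ hσT) (hψRm σ hσT) hD0 (hdbt σ hσt)
    have := intervalIntegral.norm_integral_le_of_norm_le_const hb
    rw [Real.norm_eq_abs] at this
    refine this.trans ?_
    rw [abs_of_nonneg (by linarith [hs.1, hs.2] : (0:ℝ) ≤ t - s)]
    nlinarith [mul_nonneg hC1 hD0, hs.1, hs.2]
  -- R2 Lipschitz in time, continuity
  set LR := 2 * C1 * Rm + 3/2 * C1 * Φ₁ * Rm ^ 2 + 2 * C2 + 2 * C2 * Φ₂ * Rm with hLR
  have hLR0 : 0 ≤ LR := by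
    rw [hLR]
    have a1 := mul_nonneg hC1 hRm0
    have a2 := mul_nonneg (mul_nonneg hC1 hΦ₁0) (sq_nonneg Rm)
    have a3 := mul_nonneg (mul_nonneg hC2 hΦ₂0) hRm0
    linarith
  have lipR2ρ : ∀ s ∈ Icc (0:ℝ) T', ∀ u ∈ Icc (0:ℝ) T',
      |R2 c₁ c₂ φ₁ φ₂ (ρ s) x - R2 c₁ c₂ φ₁ φ₂ (ρ u) x|
        ≤ LR * linf (fun y => ρ s y - ρ u y) := by
    intro s hs u hu
    have h := R2_diff hc₁nn hc₁sym (hc₁int₁₂ x) (hc₁int₂₃ x) (hc₁val₁₂ x) (hc₁val₂₃ x)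
      hc₂nn (hc₂int₁ x) (hc₂int₂ x) (hc₂val₁ x) (hc₂val₂ x) hφ₁meas hφ₁nn hφ₁int hφ₁val
      hφ₂meas hφ₂nn hφ₂int hφ₂val (hρmem s hs).1 (hρmem u hu).1 (hρnn s hs) (hρnn u hu)
      (fun y => (le_abs_self _).trans (hρRm s hs y))
      (fun y => (le_abs_self _).trans (hρRm u hu y)) hRm0 (linf_nonneg _)
      (fun y => le_linf_diff (hρmem s hs) (hρmem u hu) y)
    refine h.trans (le_of_eq ?_)
    rw [hLR]; ring
  have lipR2ψ : ∀ s ∈ Icc (0:ℝ) T', ∀ u ∈ Icc (0:ℝ) T',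
      |R2 c₁ c₂ φ₁ φ₂ (ψ s) x - R2 c₁ c₂ φ₁ φ₂ (ψ u) x|
        ≤ LR * linf (fun y => ψ s y - ψ u y) := by
    intro s hs u hu
    have h := R2_diff hc₁nn hc₁sym (hc₁int₁₂ x) (hc₁int₂₃ x) (hc₁val₁₂ x) (hc₁val₂₃ x)
      hc₂nn (hc₂int₁ x) (hc₂int₂ x) (hc₂val₁ x) (hc₂val₂ x) hφ₁meas hφ₁nn hφ₁int hφ₁val
      hφ₂meas hφ₂nn hφ₂int hφ₂val (hψmem s hs).1 (hψmem u hu).1 (hψnn s hs) (hψnn u hu)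
      (fun y => (le_abs_self _).trans (hψRm s hs y))
      (fun y => (le_abs_self _).trans (hψRm u hu y)) hRm0 (linf_nonneg _)
      (fun y => le_linf_diff (hψmem s hs) (hψmem u hu) y)
    refine h.trans (le_of_eq ?_)
    rw [hLR]; ring
  have contR2ρ : ContinuousOn (fun s => R2 c₁ c₂ φ₁ φ₂ (ρ s) x) (Icc 0 T') :=
    contOn_of_linf_lip hLR0 hρcont lipR2ρ
  have contR2ψ : ContinuousOn (fun s => R2 c₁ c₂ φ₁ φ₂ (ψ s) x) (Icc 0 T') :=
    contOn_of_linf_lip hLR0 hψcont lipR2ψ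
  -- continuity of the H integrals in the lower endpoint
  have hMh0 : 0 ≤ C2 + C1 * Rm := by nlinarith [mul_nonneg hC1 hRm0]
  have contHρ : ContinuousOn (fun s => ∫ σ in s..t, hker c₁ C2 (ρ σ) x) (Icc 0 t) := by
    refine contOn_of_lip hMh0 ?_
    intro s hs u hu
    have hadj := intervalIntegral.integral_add_adjacent_intervals
      (iiKerρ u (hIccsub hu) s (hIccsub hs)) (iiKerρ s (hIccsub hs) t htmem)
    have hAb : ‖∫ σ in u..s, hker c₁ C2 (ρ σ) x‖ ≤ (C2 + C1 * Rm) * |s - u| := by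
      refine intervalIntegral.norm_integral_le_of_norm_le_const fun σ hσ => ?_
      have hσT : σ ∈ Icc (0:ℝ) T' := by
        constructor
        · exact le_trans (le_min hu.1 hs.1) hσ.1.le
        · exact le_trans hσ.2 (le_trans (max_le hu.2 hs.2) htT)
      rw [Real.norm_eq_abs, abs_of_nonneg (le_trans hC2 (hKerlowρ σ hσT))]
      exact hKerupρ σ hσT
    rw [Real.norm_eq_abs] at hAb
    have : (∫ σ in s..t, hker c₁ C2 (ρ σ) x) - ∫ σ in u..t, hker c₁ C2 (ρ σ) x
        = -(∫ σ in u..s, hker c₁ C2 (ρ σ) x) := by linarith [hadj]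
    rw [this, abs_neg]
    exact hAb
  have contHψ : ContinuousOn (fun s => ∫ σ in s..t, hker c₁ C2 (ψ σ) x) (Icc 0 t) := by
    refine contOn_of_lip hMh0 ?_
    intro s hs u hu
    have hadj := intervalIntegral.integral_add_adjacent_intervals
      (iiKerψ u (hIccsub hu) s (hIccsub hs)) (iiKerψ s (hIccsub hs) t htmem)
    have hAb : ‖∫ σ in u..s, hker c₁ C2 (ψ σ) x‖ ≤ (C2 + C1 * Rm) * |s - u| := by
      refine intervalIntegral.norm_integral_le_of_norm_le_const fun σ hσ => ?_
      have hσT : σ ∈ Icc (0:ℝ) T' := by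
        constructor
        · exact le_trans (le_min hu.1 hs.1) hσ.1.le
        · exact le_trans hσ.2 (le_trans (max_le hu.2 hs.2) htT)
      rw [Real.norm_eq_abs, abs_of_nonneg (le_trans hC2 (hKerlowψ σ hσT))]
      exact hKerupψ σ hσT
    rw [Real.norm_eq_abs] at hAb
    have : (∫ σ in s..t, hker c₁ C2 (ψ σ) x) - ∫ σ in u..t, hker c₁ C2 (ψ σ) x
        = -(∫ σ in u..s, hker c₁ C2 (ψ σ) x) := by linarith [hadj]
    rw [this, abs_neg]
    exact hAb
  -- continuity and interval integrability of the full integrands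
  have contGρ : ContinuousOn (fun s => R2 c₁ c₂ φ₁ φ₂ (ρ s) x *
      Real.exp (-∫ σ in s..t, hker c₁ C2 (ρ σ) x)) (Icc 0 t) :=
    (contR2ρ.mono hIccsub).mul (Real.continuous_exp.comp_continuousOn contHρ.neg)
  have contGψ : ContinuousOn (fun s => R2 c₁ c₂ φ₁ φ₂ (ψ s) x *
      Real.exp (-∫ σ in s..t, hker c₁ C2 (ψ σ) x)) (Icc 0 t) :=
    (contR2ψ.mono hIccsub).mul (Real.continuous_exp.comp_continuousOn contHψ.neg)
  have huIcc : uIcc (0:ℝ) t = Icc 0 t := uIcc_of_le ht0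
  have iiGρ : IntervalIntegrable (fun s => R2 c₁ c₂ φ₁ φ₂ (ρ s) x *
      Real.exp (-∫ σ in s..t, hker c₁ C2 (ρ σ) x)) volume 0 t :=
    (contGρ.mono huIcc.subset).intervalIntegrable
  have iiGψ : IntervalIntegrable (fun s => R2 c₁ c₂ φ₁ φ₂ (ψ s) x *
      Real.exp (-∫ σ in s..t, hker c₁ C2 (ψ σ) x)) volume 0 t :=
    (contGψ.mono huIcc.subset).intervalIntegrable
  -- bounds on R2 along the curves (on [0,t])
  have hρup : ∀ s ∈ Icc (0:ℝ) t, ∀ y, ρ s y ≤ R :=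
    fun s hs y => (le_abs_self _).trans (hρbt s hs y)
  have hψup : ∀ s ∈ Icc (0:ℝ) t, ∀ y, ψ s y ≤ R :=
    fun s hs y => (le_abs_self _).trans (hψbt s hs y)
  have hR2ψbd : ∀ s ∈ Icc (0:ℝ) t,
      |R2 c₁ c₂ φ₁ φ₂ (ψ s) x| ≤ 3/2 * C1 * R ^ 2 + 2 * C2 * R := by
    intro s hs
    rw [abs_of_nonneg (R2_nonneg hc₁nn hc₂nn hφ₁nn hφ₂nn (hψnn s (hIccsub hs)) x)]
    exact R2_upper hc₁nn hc₁sym (hc₁int₁₂ x) (hc₁int₂₃ x) (hc₁val₁₂ x) (hc₁val₂₃ x)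
      hc₂nn (hc₂int₁ x) (hc₂int₂ x) (hc₂val₁ x) (hc₂val₂ x) hφ₁meas hφ₁nn hφ₂meas hφ₂nn
      (hψmem s (hIccsub hs)).1 (hψnn s (hIccsub hs)) (hψup s hs) hR0
  -- Lipschitz bound between the two curves at fixed s
  have hR2diff : ∀ s ∈ Icc (0:ℝ) t,
      |R2 c₁ c₂ φ₁ φ₂ (ρ s) x - R2 c₁ c₂ φ₁ φ₂ (ψ s) x|
        ≤ 2 * C1 * R * D + 3/2 * C1 * Φ₁ * R ^ 2 * D + 2 * C2 * D + 2 * C2 * Φ₂ * R * D := by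
    intro s hs
    exact R2_diff hc₁nn hc₁sym (hc₁int₁₂ x) (hc₁int₂₃ x) (hc₁val₁₂ x) (hc₁val₂₃ x)
      hc₂nn (hc₂int₁ x) (hc₂int₂ x) (hc₂val₁ x) (hc₂val₂ x) hφ₁meas hφ₁nn hφ₁int hφ₁val
      hφ₂meas hφ₂nn hφ₂int hφ₂val (hρmem s (hIccsub hs)).1 (hψmem s (hIccsub hs)).1
      (hρnn s (hIccsub hs)) (hψnn s (hIccsub hs)) (hρup s hs) (hψup s hs) hR0 hD0
      (hdbt s hs)
  -- per-s bound on the difference of the integrands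
  set KK := (2 * C1 * R * D + 3/2 * C1 * Φ₁ * R ^ 2 * D + 2 * C2 * D + 2 * C2 * Φ₂ * R * D)
    + (3/2 * C1 * R ^ 2 + 2 * C2 * R) * (C1 * D * t) with hKK
  have hGbd : ∀ s ∈ Set.uIoc (0:ℝ) t,
      ‖R2 c₁ c₂ φ₁ φ₂ (ρ s) x * Real.exp (-∫ σ in s..t, hker c₁ C2 (ρ σ) x)
        - R2 c₁ c₂ φ₁ φ₂ (ψ s) x * Real.exp (-∫ σ in s..t, hker c₁ C2 (ψ σ) x)‖ ≤ KK := by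
    intro s hs
    rw [uIoc_of_le ht0] at hs
    have hsIcc : s ∈ Icc (0:ℝ) t := ⟨hs.1.le, hs.2⟩
    rw [Real.norm_eq_abs]
    have key : R2 c₁ c₂ φ₁ φ₂ (ρ s) x * Real.exp (-∫ σ in s..t, hker c₁ C2 (ρ σ) x)
        - R2 c₁ c₂ φ₁ φ₂ (ψ s) x * Real.exp (-∫ σ in s..t, hker c₁ C2 (ψ σ) x)
        = (R2 c₁ c₂ φ₁ φ₂ (ρ s) x - R2 c₁ c₂ φ₁ φ₂ (ψ s) x) *
            Real.exp (-∫ σ in s..t, hker c₁ C2 (ρ σ) x)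
          + R2 c₁ c₂ φ₁ φ₂ (ψ s) x *
            (Real.exp (-∫ σ in s..t, hker c₁ C2 (ρ σ) x)
              - Real.exp (-∫ σ in s..t, hker c₁ C2 (ψ σ) x)) := by ring
    have hexp1 : |Real.exp (-∫ σ in s..t, hker c₁ C2 (ρ σ) x)| ≤ 1 := by
      rw [abs_of_nonneg (Real.exp_pos _).le]
      exact Real.exp_le_one_iff.2 (by linarith [hHρ0 s hsIcc])
    have hexpd : |Real.exp (-∫ σ in s..t, hker c₁ C2 (ρ σ) x)
        - Real.exp (-∫ σ in s..t, hker c₁ C2 (ψ σ) x)| ≤ C1 * D * t :=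
      (abs_exp_sub_exp (hHρ0 s hsIcc) (hHψ0 s hsIcc)).trans (hHdiff s hsIcc)
    rw [key]
    calc |(R2 c₁ c₂ φ₁ φ₂ (ρ s) x - R2 c₁ c₂ φ₁ φ₂ (ψ s) x) *
            Real.exp (-∫ σ in s..t, hker c₁ C2 (ρ σ) x)
          + R2 c₁ c₂ φ₁ φ₂ (ψ s) x *
            (Real.exp (-∫ σ in s..t, hker c₁ C2 (ρ σ) x)
              - Real.exp (-∫ σ in s..t, hker c₁ C2 (ψ σ) x))|
        ≤ |(R2 c₁ c₂ φ₁ φ₂ (ρ s) x - R2 c₁ c₂ φ₁ φ₂ (ψ s) x)| *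
            |Real.exp (-∫ σ in s..t, hker c₁ C2 (ρ σ) x)|
          + |R2 c₁ c₂ φ₁ φ₂ (ψ s) x| *
            |(Real.exp (-∫ σ in s..t, hker c₁ C2 (ρ σ) x)
              - Real.exp (-∫ σ in s..t, hker c₁ C2 (ψ σ) x))| := by
          refine (abs_add_le _ _).trans ?_
          rw [abs_mul, abs_mul]
      _ ≤ KK := by
          rw [hKK]
          have b1 := hR2diff s hsIcc
          have b2 := hR2ψbd s hsIcc
          have n1 := abs_nonneg (R2 c₁ c₂ φ₁ φ₂ (ρ s) x - R2 c₁ c₂ φ₁ φ₂ (ψ s) x)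
          have n2 := abs_nonneg (R2 c₁ c₂ φ₁ φ₂ (ψ s) x)
          have n3 := abs_nonneg (Real.exp (-∫ σ in s..t, hker c₁ C2 (ρ σ) x))
          have n4 := abs_nonneg (Real.exp (-∫ σ in s..t, hker c₁ C2 (ρ σ) x)
              - Real.exp (-∫ σ in s..t, hker c₁ C2 (ψ σ) x))
          nlinarith [mul_nonneg (mul_nonneg hC1 hD0) ht0]
  -- bound on the integral difference
  have hIntDiff : |(∫ s in (0:ℝ)..t, R2 c₁ c₂ φ₁ φ₂ (ρ s) x *
        Real.exp (-∫ σ in s..t, hker c₁ C2 (ρ σ) x))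
      - ∫ s in (0:ℝ)..t, R2 c₁ c₂ φ₁ φ₂ (ψ s) x *
        Real.exp (-∫ σ in s..t, hker c₁ C2 (ψ σ) x)| ≤ KK * t := by
    rw [← intervalIntegral.integral_sub iiGρ iiGψ]
    have := intervalIntegral.norm_integral_le_of_norm_le_const hGbd
    rw [Real.norm_eq_abs] at this
    refine this.trans (le_of_eq ?_)
    rw [abs_of_nonneg (by linarith : (0:ℝ) ≤ t - 0)]
    ring
  -- bound on the first term
  have h0mem : (0:ℝ) ∈ Icc (0:ℝ) t := ⟨le_rfl, ht0⟩
  have hFirst : |ρ₀ x * Real.exp (-∫ s in (0:ℝ)..t, hker c₁ C2 (ρ s) x)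
      - ρ₀ x * Real.exp (-∫ s in (0:ℝ)..t, hker c₁ C2 (ψ s) x)| ≤ r * (C1 * D * t) := by
    have hρ₀x : |ρ₀ x| ≤ r := (le_linf_mem hρ₀mem x).trans hρ₀r
    have hexpd : |Real.exp (-∫ s in (0:ℝ)..t, hker c₁ C2 (ρ s) x)
        - Real.exp (-∫ s in (0:ℝ)..t, hker c₁ C2 (ψ s) x)| ≤ C1 * D * t :=
      (abs_exp_sub_exp (hHρ0 0 h0mem) (hHψ0 0 h0mem)).trans (hHdiff 0 h0mem)
    have key : ρ₀ x * Real.exp (-∫ s in (0:ℝ)..t, hker c₁ C2 (ρ s) x)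
        - ρ₀ x * Real.exp (-∫ s in (0:ℝ)..t, hker c₁ C2 (ψ s) x)
        = ρ₀ x * (Real.exp (-∫ s in (0:ℝ)..t, hker c₁ C2 (ρ s) x)
          - Real.exp (-∫ s in (0:ℝ)..t, hker c₁ C2 (ψ s) x)) := by ring
    rw [key, abs_mul]
    have := abs_nonneg (Real.exp (-∫ s in (0:ℝ)..t, hker c₁ C2 (ρ s) x)
      - Real.exp (-∫ s in (0:ℝ)..t, hker c₁ C2 (ψ s) x))
    nlinarith [abs_nonneg (ρ₀ x), hr.le]
  -- final assembly
  unfold Fmap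
  have hsplit : |(ρ₀ x * Real.exp (-∫ s in (0:ℝ)..t, hker c₁ C2 (ρ s) x)
      + ∫ s in (0:ℝ)..t, R2 c₁ c₂ φ₁ φ₂ (ρ s) x *
          Real.exp (-∫ σ in s..t, hker c₁ C2 (ρ σ) x))
      - (ρ₀ x * Real.exp (-∫ s in (0:ℝ)..t, hker c₁ C2 (ψ s) x)
      + ∫ s in (0:ℝ)..t, R2 c₁ c₂ φ₁ φ₂ (ψ s) x *
          Real.exp (-∫ σ in s..t, hker c₁ C2 (ψ σ) x))|
      ≤ r * (C1 * D * t) + KK * t := by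
    have key : (ρ₀ x * Real.exp (-∫ s in (0:ℝ)..t, hker c₁ C2 (ρ s) x)
        + ∫ s in (0:ℝ)..t, R2 c₁ c₂ φ₁ φ₂ (ρ s) x *
            Real.exp (-∫ σ in s..t, hker c₁ C2 (ρ σ) x))
        - (ρ₀ x * Real.exp (-∫ s in (0:ℝ)..t, hker c₁ C2 (ψ s) x)
        + ∫ s in (0:ℝ)..t, R2 c₁ c₂ φ₁ φ₂ (ψ s) x *
            Real.exp (-∫ σ in s..t, hker c₁ C2 (ψ σ) x))
        = (ρ₀ x * Real.exp (-∫ s in (0:ℝ)..t, hker c₁ C2 (ρ s) x)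
          - ρ₀ x * Real.exp (-∫ s in (0:ℝ)..t, hker c₁ C2 (ψ s) x))
        + ((∫ s in (0:ℝ)..t, R2 c₁ c₂ φ₁ φ₂ (ρ s) x *
            Real.exp (-∫ σ in s..t, hker c₁ C2 (ρ σ) x))
          - ∫ s in (0:ℝ)..t, R2 c₁ c₂ φ₁ φ₂ (ψ s) x *
            Real.exp (-∫ σ in s..t, hker c₁ C2 (ψ σ) x)) := by ring
    rw [key]
    exact (abs_add_le _ _).trans (add_le_add hFirst hIntDiff)
  refine hsplit.trans ?_
  have hE2 : Real.exp (2 * γ * C2 * t) = E ^ 2 := by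
    rw [hE, sq, ← Real.exp_add]
    congr 1
    ring
  rw [hE2]
  have hslack : 0 ≤ r * C1 * t * N * (E ^ 2 - E) := by
    have h1 : 0 ≤ E ^ 2 - E := by nlinarith
    have h2 : 0 ≤ r * C1 * t * N :=
      mul_nonneg (mul_nonneg (mul_nonneg hr.le hC1) ht0) hN0
    exact mul_nonneg h2 h1
  have hid : E * (t * (3/2 * r^2 * C1 * E ^ 2 * (C1 * t + Φ₁)
        + r * E * (2 * C1 * C2 * t + 3 * C1 + 2 * C2 * Φ₂) + 2 * C2)) * N
      = (r * (C1 * D * t) + KK * t) + r * C1 * t * N * (E ^ 2 - E) := by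
    rw [hKK, hD, hR]
    ring
  rw [hid]
  linarith
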